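/- Let M be an NFA with L(M) ⊆ Enc and define, for p, q ∈ Q, rep_M(p, q) = pick_threshold_K(0, p, q) ∪ pick_separate_V(|Q|+1, |Q|, p, q), where pick_threshold is taken for the threshold-token sets K_M[p, q] and pick_separate for the vertex-token sets V_M[p, q]. Then L(M) contains a word encoding a positive Independent Set instance if and only if decode(L(M̂_{rep_M})) contains a positive Independent Set instance. -/

import Mathlib

/-- The fixed five-letter alphabet Σ = {▷, 1, a, #, $}. -/
inductive Letter : Type
  | tri    -- ▷
  | one    -- 1
  | lett   -- a
  | hash   -- #
  | dollar -- $
deriving DecidableEq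

/-- Words over the alphabet Σ. -/
abbrev Word := List Letter

/-- A nondeterministic finite automaton over the fixed alphabet `Letter`,
with state type `Q` (assumed finite via a `Fintype` instance where needed),
transition function `δ`, initial state `q0` and final states `F`. -/
structure NFA' (Q : Type) where
  δ : Q → Letter → Set Q
  q0 : Q
  F : Set Q

namespace NFA'

variable {Q : Type}

/-- One step of the transition function on a set of states. -/
def stepSet (M : NFA' Q) (S : Set Q) (x : Letter) : Set Q := ⋃ q ∈ S, M.δ q x

/-- The extension of the transition function to words (acting on sets of states). -/
def evalFrom (M : NFA' Q) (S : Set Q) (w : Word) : Set Q := w.foldl M.stepSet S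

/-- The language accepted by `M`. -/
def lang (M : NFA' Q) : Set Word := { w | ∃ q ∈ M.F, q ∈ M.evalFrom {M.q0} w }

/-- The automaton `M[p, q]`: same transitions, initial state `p`, unique final state `q`. -/
def between (M : NFA' Q) (p q : Q) : NFA' Q := ⟨M.δ, p, {q}⟩

/-- Every state is reachable from the initial state. -/
def Reachable (M : NFA' Q) : Prop := ∀ q : Q, ∃ w : Word, q ∈ M.evalFrom {M.q0} w

/-- From every state some final state can be reached. -/
def CoReachable (M : NFA' Q) : Prop :=
  ∀ q : Q, ∃ w : Word, ∃ f ∈ M.F, f ∈ M.evalFrom {q} w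

end NFA'

/-- `rep` is a representative function for `M`: each `rep p q` is a finite subset
of `L(M[p, q])`. -/
def IsRepFun {Q : Type} (M : NFA' Q) (rep : Q → Q → Set Word) : Prop :=
  ∀ p q : Q, (rep p q).Finite ∧ rep p q ⊆ (M.between p q).lang

/-- The language `L(M̂_rep)`: all words obtained by concatenating representatives
along a path from the initial state to a final state. -/
def hatLang {Q : Type} (M : NFA' Q) (rep : Q → Q → Set Word) : Set Word :=
  { w | ∃ (m : ℕ) (u : Fin m → Word) (qs : Fin (m + 1) → Q),
      qs 0 = M.q0 ∧ qs (Fin.last m) ∈ M.F ∧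
      (∀ i : Fin m, u i ∈ rep (qs i.castSucc) (qs i.succ)) ∧
      w = (List.ofFn u).flatten }

/-- The threshold token `▷1^k$`. -/
def thresholdTok (k : ℕ) : Word := Letter.tri :: (List.replicate k Letter.one ++ [Letter.dollar])

/-- The left vertex token `▷a^p#`. -/
def leftTok (p : ℕ) : Word := Letter.tri :: (List.replicate p Letter.lett ++ [Letter.hash])

/-- The right vertex token `▷a^q$`. -/
def rightTok (q : ℕ) : Word := Letter.tri :: (List.replicate q Letter.lett ++ [Letter.dollar])

/-- The encoding `▷1^k$ ∏_i (▷a^{p_i}# ▷a^{q_i}$)` of a threshold `k` together with a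
list of (encoded) edges. -/
def encode (k : ℕ) (es : List (ℕ × ℕ)) : Word :=
  thresholdTok k ++ (es.map (fun e => leftTok e.1 ++ rightTok e.2)).flatten

/-- The regular language `Enc = ▷1*$(▷a*#▷a*$)*` of all encodings. -/
def Enc : Set Word := { w | ∃ (k : ℕ) (es : List (ℕ × ℕ)), w = encode k es }

/-- A token: a threshold token, a left vertex token, or a right vertex token. -/
def IsToken (w : Word) : Prop :=
  (∃ k, w = thresholdTok k) ∨ (∃ p, w = leftTok p) ∨ (∃ q, w = rightTok q)

/-- A representative function is token-preserving if all representatives are tokens. -/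
def TokenPreserving {Q : Type} (rep : Q → Q → Set Word) : Prop :=
  ∀ p q : Q, ∀ w ∈ rep p q, IsToken w

/-- A finite simple undirected graph with vertices named by natural numbers:
a finite vertex set and a finite set of undirected edges. -/
structure FinGraph where
  V : Finset ℕ
  E : Finset (Sym2 ℕ)

/-- `G` has a vertex cover of size at most `k`. -/
def HasVC (G : FinGraph) (k : ℕ) : Prop :=
  ∃ S : Finset ℕ, S ⊆ G.V ∧ S.card ≤ k ∧ ∀ e ∈ G.E, ∃ a ∈ S, a ∈ e

/-- `G` has an independent set of size at least `k`. -/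
def HasIS (G : FinGraph) (k : ℕ) : Prop :=
  ∃ S : Finset ℕ, S ⊆ G.V ∧ k ≤ S.card ∧ ∀ a ∈ S, ∀ b ∈ S, s(a, b) ∉ G.E

/-- The graph described by a list of (encoded) edges: vertices are all the numbers
occurring, edges are the non-loop pairs. -/
def graphOf (es : List (ℕ × ℕ)) : FinGraph where
  V := (es.map Prod.fst).toFinset ∪ (es.map Prod.snd).toFinset
  E := ((es.filter (fun e => e.1 ≠ e.2)).map (fun e => s(e.1, e.2))).toFinset

/-- `decode(w) = (G, k)` : the word `w ∈ Enc` encodes the graph `G` and threshold `k`. -/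
def decodesTo (w : Word) (G : FinGraph) (k : ℕ) : Prop :=
  ∃ es : List (ℕ × ℕ), w = encode k es ∧ G = graphOf es

/-- The set of all threshold tokens (the language `▷1*$`). -/
def ThreshTokens : Set Word := { w | ∃ k, w = thresholdTok k }

/-- The set of all vertex tokens (the language `▷a*(#|$)`). -/
def VertTokens : Set Word := { w | (∃ p, w = leftTok p) ∨ (∃ q, w = rightTok q) }

/-- The threshold-token sets `K_M[p, q] = L(M[p, q]) ∩ L(▷1*$)`. -/
def KM {Q : Type} (M : NFA' Q) (p q : Q) : Set Word := (M.between p q).lang ∩ ThreshTokens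

/-- The vertex-token sets `V_M[p, q] = L(M[p, q]) ∩ L(▷a*(#|$))`. -/
def VM {Q : Type} (M : NFA' Q) (p q : Q) : Set Word := (M.between p q).lang ∩ VertTokens

/-- `u, qs` form a characteristic factorization (of `u₀u₁⋯u_m`) with respect to the
states `qs 0 = q₀, qs 1, …`: the first factor is a threshold token from `K_M[q₀, q₁]`,
all later factors are vertex tokens from the corresponding `V_M`-sets, and the last
state is final. -/
def CharFact {Q : Type} (M : NFA' Q) {m : ℕ} (u : Fin (m + 1) → Word)
    (qs : Fin (m + 2) → Q) : Prop :=
  qs 0 = M.q0 ∧ qs (Fin.last (m + 1)) ∈ M.F ∧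
  u 0 ∈ KM M (qs 0) (qs 1) ∧
  ∀ i : Fin (m + 1), 0 < i.val → u i ∈ VM M (qs i.castSucc) (qs i.succ)

/-- A fixed numbering of the alphabet, inducing a linear order on `Letter`. -/
def letterIdx : Letter → ℕ
  | Letter.tri => 0
  | Letter.one => 1
  | Letter.lett => 2
  | Letter.hash => 3
  | Letter.dollar => 4

/-- Strict shortlex order on words: first by length, then lexicographically. -/
def slLT (u v : Word) : Prop :=
  u.length < v.length ∨
    (u.length = v.length ∧ List.Lex (fun a b => letterIdx a < letterIdx b) u v)

/-- Non-strict shortlex order. -/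
def slLE (u v : Word) : Prop := slLT u v ∨ u = v

/-- `w` is the shortlex-smallest element of `S`. -/
def IsSlLeast (S : Set Word) (w : Word) : Prop := w ∈ S ∧ ∀ v ∈ S, slLE w v

/-- The quotient `L/1` of a language: remove the last letter from every word. -/
def langDiv1 (L : Set Word) : Set Word := { w | ∃ σ : Letter, w ++ [σ] ∈ L }

/-- `pick_threshold_T(k, p, q)`: all of `T p q` if it is finite, otherwise the
shortlex-smallest element of `T p q` of length at least `k`. -/
def pickThreshold {Q : Type} (T : Q → Q → Set Word) (k : ℕ) (p q : Q) : Set Word :=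
  { w | ((T p q).Finite ∧ w ∈ T p q) ∨
        (¬ (T p q).Finite ∧ IsSlLeast { v | v ∈ T p q ∧ k ≤ v.length } w) }

/-- The auxiliary function `pick_merge^G_T(p, q)`: for every `A ⊆ Q²` containing
`(p, q)` whose intersection `⋂_{(p',q') ∈ A} T[p',q']/1` is nonempty, it contains the
shortlex-smallest element of that intersection. -/
def pickMergeG {Q : Type} (T : Q → Q → Set Word) (p q : Q) : Set Word :=
  { w | ∃ A : Set (Q × Q), (p, q) ∈ A ∧
        IsSlLeast (⋂ r ∈ A, langDiv1 (T r.1 r.2)) w }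

/-- `pick_merge_T(p, q) = T[p, q] ∩ (pick_merge^G_T(p, q)·Σ)`. -/
def pickMerge {Q : Type} (T : Q → Q → Set Word) (p q : Q) : Set Word :=
  { x | x ∈ T p q ∧ ∃ w ∈ pickMergeG T p q, ∃ σ : Letter, x = w ++ [σ] }

/-- `ps` is a family `pick_separate_T(s, t, ·, ·)`: for some linear order (injection
into ℕ) on the pairs of states, processed in this order, the value at a pair with
finite `T`-set is that whole set, and at a pair with infinite `T`-set it consists of
exactly the `s` shortlex-first elements `w` of `T p q` of length at least `t` whose
`w/1` avoids `v/1` for all `v` in the sets chosen at previously processed pairs. -/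
def IsPickSeparate {Q : Type} (T : Q → Q → Set Word) (s t : ℕ)
    (ps : Q → Q → Set Word) : Prop :=
  ∃ ord : Q × Q → ℕ, Function.Injective ord ∧
    ∀ p q : Q,
      ((T p q).Finite → ps p q = T p q) ∧
      (¬ (T p q).Finite →
        (∀ w ∈ ps p q, w ∈ T p q ∧ t ≤ w.length ∧
          ∀ p' q' : Q, ord (p', q') < ord (p, q) →
            ∀ v ∈ ps p' q', v.dropLast ≠ w.dropLast) ∧
        (ps p q).ncard = s ∧
        (∀ w : Word,
          (w ∈ T p q ∧ t ≤ w.length ∧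
            ∀ p' q' : Q, ord (p', q') < ord (p, q) →
              ∀ v ∈ ps p' q', v.dropLast ≠ w.dropLast) →
          w ∉ ps p q → ∀ v ∈ ps p q, slLE v w))


section AutomatonBasics

namespace NFA'
variable {Q : Type} (M : NFA' Q)

lemma evalFrom_nil (S : Set Q) : M.evalFrom S [] = S := rfl

lemma evalFrom_cons (S : Set Q) (a : Letter) (w : Word) :
    M.evalFrom S (a :: w) = M.evalFrom (M.stepSet S a) w := rfl

lemma evalFrom_append (S : Set Q) (u v : Word) :
    M.evalFrom S (u ++ v) = M.evalFrom (M.evalFrom S u) v :=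
  List.foldl_append

lemma mem_stepSet_iff {S : Set Q} {a x} : x ∈ M.stepSet S a ↔ ∃ q ∈ S, x ∈ M.δ q a := by
  simp [stepSet]

lemma stepSet_singleton (q : Q) (a : Letter) : M.stepSet {q} a = M.δ q a := by
  ext x; simp [stepSet]

lemma mem_evalFrom_singleton_cons {q x : Q} {a : Letter} {w : Word} :
    x ∈ M.evalFrom {q} (a :: w) ↔ x ∈ M.evalFrom (M.δ q a) w := by
  rw [evalFrom_cons, stepSet_singleton]

lemma mem_evalFrom_iff {S : Set Q} {w : Word} {x : Q} :
    x ∈ M.evalFrom S w ↔ ∃ q ∈ S, x ∈ M.evalFrom {q} w := by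
  induction w generalizing S with
  | nil => simp [evalFrom_nil]
  | cons a w ih =>
    rw [evalFrom_cons, ih]
    constructor
    · rintro ⟨r, hr, h⟩
      obtain ⟨q, hq, hr'⟩ := (M.mem_stepSet_iff).1 hr
      refine ⟨q, hq, ?_⟩
      rw [mem_evalFrom_singleton_cons, ih]
      exact ⟨r, hr', h⟩
    · rintro ⟨q, hq, h⟩
      rw [mem_evalFrom_singleton_cons, ih] at h
      obtain ⟨r, hr, h⟩ := h
      exact ⟨r, (M.mem_stepSet_iff).2 ⟨q, hq, hr⟩, h⟩

lemma between_evalFrom (p q : Q) (S : Set Q) (w : Word) :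
    (M.between p q).evalFrom S w = M.evalFrom S w := rfl

lemma mem_between_lang_iff {p q : Q} {w : Word} :
    w ∈ (M.between p q).lang ↔ q ∈ M.evalFrom {p} w := by
  constructor
  · rintro ⟨f, hf, h⟩
    have hfq : f = q := hf
    subst hfq
    exact h
  · intro h
    exact ⟨q, rfl, h⟩

lemma between_lang_append {p r q : Q} {u v : Word}
    (hu : u ∈ (M.between p r).lang) (hv : v ∈ (M.between r q).lang) :
    u ++ v ∈ (M.between p q).lang := by
  rw [mem_between_lang_iff] at *
  rw [evalFrom_append, mem_evalFrom_iff]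
  exact ⟨r, hu, hv⟩



lemma mem_lang_of_between {f : Q} (hf : f ∈ M.F) {w : Word}
    (h : w ∈ (M.between M.q0 f).lang) : w ∈ M.lang := by
  rw [mem_between_lang_iff] at h; exact ⟨f, hf, h⟩

end NFA'

/-- Chains of words through successive `between`-languages. -/
inductive ChainFrom {Q : Type} (M : NFA' Q) : Q → List Word → Q → Prop
  | nil (p : Q) : ChainFrom M p [] p
  | cons {p r q : Q} {us : List Word} (u : Word) :
      u ∈ (M.between p r).lang → ChainFrom M r us q → ChainFrom M p (u :: us) q

lemma ChainFrom.flatten_mem {Q : Type} {M : NFA' Q} :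
    ∀ {p q : Q} {us : List Word}, ChainFrom M p us q → us.flatten ∈ (M.between p q).lang := by
  intro p q us h
  induction h with
  | nil p' => simp [NFA'.mem_between_lang_iff, NFA'.evalFrom_nil]
  | cons u hu _ ih => simpa using M.between_lang_append hu ih

lemma chainFrom_of_flatten {Q : Type} {M : NFA' Q} :
    ∀ (us : List Word) (p q : Q), us.flatten ∈ (M.between p q).lang → ChainFrom M p us q := by
  intro us
  induction us with
  | nil =>
    intro p q h
    simp [NFA'.mem_between_lang_iff, NFA'.evalFrom_nil] at h
    subst h; exact ChainFrom.nil _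
  | cons u us ih =>
    intro p q h
    rw [List.flatten_cons, NFA'.mem_between_lang_iff, NFA'.evalFrom_append,
      NFA'.mem_evalFrom_iff] at h
    obtain ⟨r, hr, h⟩ := h
    exact ChainFrom.cons u ((M.mem_between_lang_iff).2 hr) (ih r q ((M.mem_between_lang_iff).2 h))

end AutomatonBasics

section HatLangBasics

/-- Chains through the `rep` sets. -/
inductive RepChain {Q : Type} (rep : Q → Q → Set Word) : Q → List Word → Q → Prop
  | nil (p : Q) : RepChain rep p [] p
  | cons {p r q : Q} {us : List Word} (u : Word) :
      u ∈ rep p r → RepChain rep r us q → RepChain rep p (u :: us) q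

variable {Q : Type} {M : NFA' Q} {rep : Q → Q → Set Word}

lemma hatLang_intro (us : List Word) (qs : ℕ → Q) (h0 : qs 0 = M.q0)
    (hF : qs us.length ∈ M.F)
    (hmem : ∀ i, i < us.length → us.getD i [] ∈ rep (qs i) (qs (i + 1))) :
    us.flatten ∈ hatLang M rep := by
  refine ⟨us.length, fun i => us.getD i [], fun i => qs i, ?_, ?_, ?_, ?_⟩
  · simpa using h0
  · simpa using hF
  · intro i
    simpa using hmem i i.isLt
  · congr 1
    apply List.ext_getElem
    · simp
    · intro i h1 h2
      simp [List.getD_eq_getElem]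

lemma repChain_of_fn {m : ℕ} (u : Fin m → Word) (qs : Fin (m + 1) → Q)
    (h : ∀ i : Fin m, u i ∈ rep (qs i.castSucc) (qs i.succ)) :
    RepChain rep (qs 0) (List.ofFn u) (qs (Fin.last m)) := by
  induction m with
  | zero =>
    have : qs (Fin.last 0) = qs 0 := rfl
    rw [this, List.ofFn_zero]
    exact RepChain.nil _
  | succ m ih =>
    rw [List.ofFn_succ]
    have h1 : qs (Fin.last (m + 1)) = (fun i => qs i.succ) (Fin.last m) := by
      simp [Fin.succ_last]
    rw [h1]
    refine RepChain.cons (u 0) ?_ (ih (fun i => u i.succ) (fun i => qs i.succ) (fun i => ?_))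
    · have := h 0
      simpa using this
    · have := h i.succ
      simpa only [Fin.succ_castSucc] using this

lemma hatLang_elim {w : Word} (hw : w ∈ hatLang M rep) :
    ∃ (us : List Word) (qf : Q), qf ∈ M.F ∧ RepChain rep M.q0 us qf ∧ w = us.flatten := by
  obtain ⟨m, u, qs, h0, hF, hmem, hw⟩ := hw
  exact ⟨List.ofFn u, qs (Fin.last m), hF, h0 ▸ repChain_of_fn u qs hmem, hw⟩

lemma RepChain.toChain (hrep : ∀ p q : Q, rep p q ⊆ (M.between p q).lang) :
    ∀ {p q : Q} {us : List Word}, RepChain rep p us q → ChainFrom M p us q := by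
  intro p q us h
  induction h with
  | nil p' => exact ChainFrom.nil p'
  | cons u hu _ ih => exact ChainFrom.cons u (hrep _ _ hu) ih

lemma hatLang_subset_lang (hrep : ∀ p q : Q, rep p q ⊆ (M.between p q).lang) :
    hatLang M rep ⊆ M.lang := by
  intro w hw
  obtain ⟨us, qf, hqf, hchain, rfl⟩ := hatLang_elim hw
  exact M.mem_lang_of_between hqf (hchain.toChain hrep).flatten_mem

end HatLangBasics

section TokenFacts

lemma thresholdTok_length (k : ℕ) : (thresholdTok k).length = k + 2 := by
  simp [thresholdTok]

lemma leftTok_length (p : ℕ) : (leftTok p).length = p + 2 := by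
  simp [leftTok]

lemma rightTok_length (p : ℕ) : (rightTok p).length = p + 2 := by
  simp [rightTok]

lemma leftTok_dropLast (p : ℕ) : (leftTok p).dropLast = Letter.tri :: List.replicate p Letter.lett := by
  show ((Letter.tri :: List.replicate p Letter.lett) ++ [Letter.hash]).dropLast = _
  rw [List.dropLast_concat]

lemma rightTok_dropLast (p : ℕ) : (rightTok p).dropLast = Letter.tri :: List.replicate p Letter.lett := by
  show ((Letter.tri :: List.replicate p Letter.lett) ++ [Letter.dollar]).dropLast = _
  rw [List.dropLast_concat]

/-- the "vertex name" of a token -/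
def nameOf (w : Word) : ℕ := w.length - 2

lemma nameOf_leftTok (p : ℕ) : nameOf (leftTok p) = p := by simp [nameOf, leftTok_length]
lemma nameOf_rightTok (p : ℕ) : nameOf (rightTok p) = p := by simp [nameOf, rightTok_length]

def isMarker (a : Letter) : Bool :=
  match a with
  | Letter.hash => true
  | Letter.dollar => true
  | _ => false

def markers (w : Word) : Word := w.filter isMarker

lemma markers_append (u v : Word) : markers (u ++ v) = markers u ++ markers v := by
  simp [markers]

lemma markers_thresholdTok (k : ℕ) : markers (thresholdTok k) = [Letter.dollar] := by
  simp [markers, thresholdTok, List.filter_append, List.filter_replicate, isMarker]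

lemma markers_leftTok (p : ℕ) : markers (leftTok p) = [Letter.hash] := by
  simp [markers, leftTok, List.filter_append, List.filter_replicate, isMarker]

lemma markers_rightTok (p : ℕ) : markers (rightTok p) = [Letter.dollar] := by
  simp [markers, rightTok, List.filter_append, List.filter_replicate, isMarker]

lemma leftTok_ne_rightTok (a b : ℕ) : leftTok a ≠ rightTok b := by
  intro h
  have := congrArg markers h
  rw [markers_leftTok, markers_rightTok] at this
  simp at this

lemma leftTok_injective : Function.Injective leftTok := by
  intro a b h
  have := congrArg List.length h
  rw [leftTok_length, leftTok_length] at this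
  omega

lemma rightTok_injective : Function.Injective rightTok := by
  intro a b h
  have := congrArg List.length h
  rw [rightTok_length, rightTok_length] at this
  omega

/-- the marker pattern of encodings -/
def mSeq (n : ℕ) : Word := Letter.dollar :: (List.replicate n [Letter.hash, Letter.dollar]).flatten

lemma mSeq_length (n : ℕ) : (mSeq n).length = 2 * n + 1 := by
  unfold mSeq
  induction n with
  | zero => simp
  | succ n ih => simp [List.replicate_succ] at ih ⊢; omega

lemma markers_edges (es : List (ℕ × ℕ)) :
    markers (es.map fun e => leftTok e.1 ++ rightTok e.2).flatten
      = (List.replicate es.length [Letter.hash, Letter.dollar]).flatten := by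
  induction es with
  | nil => simp [markers]
  | cons e es ih =>
    simp [markers_append, markers_leftTok, markers_rightTok, List.replicate_succ, ih]

lemma markers_encode (k : ℕ) (es : List (ℕ × ℕ)) : markers (encode k es) = mSeq es.length := by
  unfold encode
  rw [markers_append, markers_thresholdTok]
  unfold mSeq
  rw [markers_edges]
  rfl

lemma markers_vertTok {v : Word} (hv : v ∈ VertTokens) : ∃ c : Letter, markers v = [c] := by
  rcases hv with ⟨p, rfl⟩ | ⟨p, rfl⟩
  · exact ⟨_, markers_leftTok p⟩
  · exact ⟨_, markers_rightTok p⟩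

/-- two vertex tokens appearing in the same context inside `Enc` have the same side -/
lemma enc_same_side {x v v' y : Word} (hz : x ++ (v ++ y) ∈ Enc) (hz' : x ++ (v' ++ y) ∈ Enc)
    (hv : v ∈ VertTokens) (hv' : v' ∈ VertTokens) :
    (∃ a b, v = leftTok a ∧ v' = leftTok b) ∨ (∃ a b, v = rightTok a ∧ v' = rightTok b) := by
  obtain ⟨c, hc⟩ := markers_vertTok hv
  obtain ⟨c', hc'⟩ := markers_vertTok hv'
  obtain ⟨k, es, he⟩ := hz
  obtain ⟨k', es', he'⟩ := hz'
  have h1 : markers x ++ ([c] ++ markers y) = mSeq es.length := by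
    rw [← hc, ← markers_append, ← markers_append, he, markers_encode]
  have h2 : markers x ++ ([c'] ++ markers y) = mSeq es'.length := by
    rw [← hc', ← markers_append, ← markers_append, he', markers_encode]
  have hlen : es.length = es'.length := by
    have l1 := congrArg List.length h1
    have l2 := congrArg List.length h2
    rw [mSeq_length] at l1 l2
    simp at l1 l2
    omega
  rw [hlen, ← h2] at h1
  have hcc : c = c' := by
    have := List.append_cancel_left h1
    simpa using this
  rcases hv with ⟨a, rfl⟩ | ⟨a, rfl⟩ <;> rcases hv' with ⟨b, rfl⟩ | ⟨b, rfl⟩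
  · exact Or.inl ⟨a, b, rfl, rfl⟩
  · rw [markers_leftTok] at hc; rw [markers_rightTok] at hc'
    simp at hc hc'; rw [← hc, ← hc'] at hcc; simp at hcc
  · rw [markers_rightTok] at hc; rw [markers_leftTok] at hc'
    simp at hc hc'; rw [← hc, ← hc'] at hcc; simp at hcc
  · exact Or.inr ⟨a, b, rfl, rfl⟩

end TokenFacts

section VMFacts

variable {Q : Type} {M : NFA' Q}

lemma exists_context (hre : M.Reachable) (hco : M.CoReachable) (p q : Q) :
    ∃ x y : Word, ∀ v, v ∈ (M.between p q).lang → x ++ (v ++ y) ∈ M.lang := by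
  obtain ⟨x, hx⟩ := hre p
  obtain ⟨y, f, hf, hy⟩ := hco q
  refine ⟨x, y, fun v hv => ?_⟩
  rw [M.mem_between_lang_iff] at hv
  refine ⟨f, hf, ?_⟩
  rw [NFA'.evalFrom_append, NFA'.mem_evalFrom_iff]
  refine ⟨p, hx, ?_⟩
  rw [NFA'.evalFrom_append, NFA'.mem_evalFrom_iff]
  exact ⟨q, hv, hy⟩

lemma VM_same_side (hEnc : M.lang ⊆ Enc) (hre : M.Reachable) (hco : M.CoReachable)
    {p q : Q} {v v' : Word} (hv : v ∈ VM M p q) (hv' : v' ∈ VM M p q) :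
    (∃ a b, v = leftTok a ∧ v' = leftTok b) ∨ (∃ a b, v = rightTok a ∧ v' = rightTok b) := by
  obtain ⟨x, y, hctx⟩ := exists_context hre hco p q
  exact enc_same_side (hEnc (hctx v hv.1)) (hEnc (hctx v' hv'.1)) hv.2 hv'.2

lemma VM_eq_of_length (hEnc : M.lang ⊆ Enc) (hre : M.Reachable) (hco : M.CoReachable)
    {p q : Q} {v v' : Word} (hv : v ∈ VM M p q) (hv' : v' ∈ VM M p q)
    (hl : v.length = v'.length) : v = v' := by
  rcases VM_same_side hEnc hre hco hv hv' with ⟨a, b, rfl, rfl⟩ | ⟨a, b, rfl, rfl⟩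
  · simp only [leftTok_length] at hl
    exact congrArg leftTok (by omega)
  · simp only [rightTok_length] at hl
    exact congrArg rightTok (by omega)

lemma vertTok_dropLast {v : Word} (hv : v ∈ VertTokens) :
    v.dropLast = Letter.tri :: List.replicate (nameOf v) Letter.lett := by
  rcases hv with ⟨a, rfl⟩ | ⟨a, rfl⟩
  · rw [nameOf_leftTok, leftTok_dropLast]
  · rw [nameOf_rightTok, rightTok_dropLast]

lemma vertTok_dropLast_eq {v v' : Word} (hv : v ∈ VertTokens) (hv' : v' ∈ VertTokens)
    (h : nameOf v = nameOf v') : v.dropLast = v'.dropLast := by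
  rw [vertTok_dropLast hv, vertTok_dropLast hv', h]

lemma vertTok_length {v : Word} (hv : v ∈ VertTokens) : v.length = nameOf v + 2 := by
  rcases hv with ⟨a, rfl⟩ | ⟨a, rfl⟩ <;> simp [nameOf_leftTok, nameOf_rightTok, leftTok_length, rightTok_length]

end VMFacts

section Pumping

set_option linter.unusedSectionVars false

variable {Q : Type} [Fintype Q] {M : NFA' Q}

lemma mem_evalFrom_replicate_iff {x : Letter} {q q' : Q} {r : ℕ} :
    q' ∈ M.evalFrom {q} (List.replicate r x) ↔
      ∃ f : ℕ → Q, f 0 = q ∧ f r = q' ∧ ∀ i < r, f (i + 1) ∈ M.δ (f i) x := by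
  induction r generalizing q with
  | zero =>
    constructor
    · intro h
      have hq : q' = q := h
      exact ⟨fun _ => q, rfl, hq.symm, by omega⟩
    · rintro ⟨f, h0, hr, _⟩
      show q' ∈ ({q} : Set Q)
      exact hr.symm.trans h0
  | succ r ih =>
    rw [List.replicate_succ, NFA'.mem_evalFrom_singleton_cons, NFA'.mem_evalFrom_iff]
    constructor
    · rintro ⟨q₁, hq₁, h⟩
      obtain ⟨f, h0, hr, hstep⟩ := ih.1 h
      refine ⟨fun i => if i = 0 then q else f (i - 1), rfl, by simp [hr], fun i hi => ?_⟩
      rcases Nat.eq_zero_or_pos i with rfl | hpos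
      · simpa [h0] using hq₁
      · have h1 : i + 1 - 1 = i - 1 + 1 := by omega
        simp only [if_neg (by omega : ¬ i + 1 = 0), if_neg (by omega : ¬ i = 0), h1]
        exact hstep (i - 1) (by omega)
    · rintro ⟨f, h0, hr, hstep⟩
      refine ⟨f 1, h0 ▸ hstep 0 (by omega), ih.2 ⟨fun i => f (i + 1), rfl, hr, fun i hi => hstep (i + 1) (by omega)⟩⟩

lemma replicate_reach_trans {x : Letter} {q₁ q₂ q₃ : Q} {r₁ r₂ : ℕ}
    (h1 : q₂ ∈ M.evalFrom {q₁} (List.replicate r₁ x))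
    (h2 : q₃ ∈ M.evalFrom {q₂} (List.replicate r₂ x)) :
    q₃ ∈ M.evalFrom {q₁} (List.replicate (r₁ + r₂) x) := by
  rw [List.replicate_add, NFA'.evalFrom_append, NFA'.mem_evalFrom_iff]
  exact ⟨q₂, h1, h2⟩

lemma replicate_cycle_pow {x : Letter} {q : Q} {c : ℕ}
    (h : q ∈ M.evalFrom {q} (List.replicate c x)) (n : ℕ) :
    q ∈ M.evalFrom {q} (List.replicate (n * c) x) := by
  induction n with
  | zero =>
    rw [Nat.zero_mul]
    exact rfl
  | succ n ih =>
    have : (n + 1) * c = n * c + c := by ring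
    rw [this]
    exact replicate_reach_trans ih h

lemma replicate_pump {x : Letter} {q q' : Q} {r : ℕ}
    (h : q' ∈ M.evalFrom {q} (List.replicate r x)) (hr : Fintype.card Q ≤ r) :
    ∃ a c d, a + c + d = r ∧ 1 ≤ c ∧
      ∀ n : ℕ, q' ∈ M.evalFrom {q} (List.replicate (a + n * c + d) x) := by
  obtain ⟨f, h0, hfr, hstep⟩ := mem_evalFrom_replicate_iff.1 h
  have hni : ¬ Function.Injective (fun i : Fin (r + 1) => f i) := by
    intro hinj
    have := Fintype.card_le_of_injective _ hinj
    simp at this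
    omega
  rw [Function.not_injective_iff] at hni
  obtain ⟨i, j, hfij, hij⟩ := hni
  -- wlog i < j
  obtain ⟨a, b, hab, hfab⟩ : ∃ a b : ℕ, a < b ∧ b ≤ r ∧ f a = f b := by
    rcases Nat.lt_or_ge i.val j.val with h' | h'
    · exact ⟨i, j, h', by omega, hfij⟩
    · have : j.val < i.val := by
        rcases Nat.lt_or_ge j.val i.val with h'' | h''
        · exact h''
        · exact absurd (Fin.ext (by omega)) hij
      exact ⟨j, i, this, by omega, hfij.symm⟩
  obtain ⟨hbr, hfab⟩ := hfab
  refine ⟨a, b - a, r - b, by omega, by omega, fun n => ?_⟩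
  have seg1 : f a ∈ M.evalFrom {q} (List.replicate a x) :=
    mem_evalFrom_replicate_iff.2 ⟨f, h0, rfl, fun i hi => hstep i (by omega)⟩
  have cyc : f a ∈ M.evalFrom {f a} (List.replicate (b - a) x) := by
    refine mem_evalFrom_replicate_iff.2 ⟨fun i => f (a + i), by simp, ?_, fun i hi => ?_⟩
    · show f (a + (b - a)) = f a
      have h2 : a + (b - a) = b := by omega
      rw [h2, hfab]
    · show f (a + (i + 1)) ∈ M.δ (f (a + i)) x
      have h1 : a + (i + 1) = a + i + 1 := by omega
      rw [h1]
      exact hstep (a + i) (by omega)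
  have seg2 : q' ∈ M.evalFrom {f b} (List.replicate (r - b) x) := by
    refine mem_evalFrom_replicate_iff.2 ⟨fun i => f (b + i), by simp, ?_, fun i hi => ?_⟩
    · show f (b + (r - b)) = q'
      have h2 : b + (r - b) = r := by omega
      rw [h2, hfr]
    · show f (b + (i + 1)) ∈ M.δ (f (b + i)) x
      have h1 : b + (i + 1) = b + i + 1 := by omega
      rw [h1]
      exact hstep (b + i) (by omega)
  exact replicate_reach_trans (replicate_reach_trans seg1 (replicate_cycle_pow cyc n)) (hfab ▸ seg2)

lemma mem_evalFrom_tok_iff {x y : Letter} {q q' : Q} {r : ℕ} :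
    q' ∈ M.evalFrom {q} (Letter.tri :: (List.replicate r x ++ [y])) ↔
      ∃ q₁ q₂, q₁ ∈ M.δ q Letter.tri ∧ q₂ ∈ M.evalFrom {q₁} (List.replicate r x) ∧
        q' ∈ M.δ q₂ y := by
  rw [NFA'.mem_evalFrom_singleton_cons, NFA'.mem_evalFrom_iff]
  constructor
  · rintro ⟨q₁, hq₁, h⟩
    rw [NFA'.evalFrom_append, NFA'.mem_evalFrom_iff] at h
    obtain ⟨q₂, hq₂, h⟩ := h
    rw [show M.evalFrom {q₂} [y] = M.stepSet {q₂} y from rfl, NFA'.stepSet_singleton] at h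
    exact ⟨q₁, q₂, hq₁, hq₂, h⟩
  · rintro ⟨q₁, q₂, hq₁, hq₂, h⟩
    refine ⟨q₁, hq₁, ?_⟩
    rw [NFA'.evalFrom_append, NFA'.mem_evalFrom_iff]
    refine ⟨q₂, hq₂, ?_⟩
    rw [show M.evalFrom {q₂} [y] = M.stepSet {q₂} y from rfl, NFA'.stepSet_singleton]
    exact h

lemma tok_pump {x y : Letter} {p q : Q} {r : ℕ}
    (h : (Letter.tri :: (List.replicate r x ++ [y])) ∈ (M.between p q).lang)
    (hr : Fintype.card Q ≤ r) :
    ∃ a c d, a + c + d = r ∧ 1 ≤ c ∧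
      ∀ n : ℕ, (Letter.tri :: (List.replicate (a + n * c + d) x ++ [y])) ∈ (M.between p q).lang := by
  rw [M.mem_between_lang_iff, mem_evalFrom_tok_iff] at h
  obtain ⟨q₁, q₂, hq₁, hq₂, hq'⟩ := h
  obtain ⟨a, c, d, habc, hc, hpump⟩ := replicate_pump hq₂ hr
  refine ⟨a, c, d, habc, hc, fun n => ?_⟩
  rw [M.mem_between_lang_iff, mem_evalFrom_tok_iff]
  exact ⟨q₁, q₂, hq₁, hpump n, hq'⟩

lemma unbounded_length_infinite {S : Set Word} (h : ∀ N : ℕ, ∃ w ∈ S, N ≤ w.length) :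
    ¬ S.Finite := by
  intro hfin
  have hfin' : (List.length '' S).Finite := hfin.image _
  obtain ⟨B, hB⟩ := hfin'.bddAbove
  obtain ⟨w, hw, hlen⟩ := h (B + 1)
  have := hB ⟨w, hw, rfl⟩
  omega

/-- If `K_M[p,q]` is nonempty then it contains a short threshold token. -/
lemma KM_exists_short {p q : Q} (hne : (KM M p q).Nonempty) :
    ∃ k', k' + 1 ≤ Fintype.card Q ∧ thresholdTok k' ∈ KM M p q := by
  have key : ∀ k, thresholdTok k ∈ KM M p q → ∃ k', k' + 1 ≤ Fintype.card Q ∧ thresholdTok k' ∈ KM M p q := by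
    intro k
    induction k using Nat.strong_induction_on with
    | _ k ih =>
      intro hk
      by_cases hsmall : k + 1 ≤ Fintype.card Q
      · exact ⟨k, hsmall, hk⟩
      · have hk' : Fintype.card Q ≤ k := by omega
        have hlang : (Letter.tri :: (List.replicate k Letter.one ++ [Letter.dollar]))
            ∈ (M.between p q).lang := hk.1
        obtain ⟨a, c, d, habc, hc, hpump⟩ := tok_pump hlang hk'
        have hmem : thresholdTok (a + 0 * c + d) ∈ KM M p q := ⟨hpump 0, ⟨_, rfl⟩⟩
        exact ih (a + 0 * c + d) (by omega) hmem
  obtain ⟨w, hw⟩ := hne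
  obtain ⟨k, rfl⟩ := hw.2
  exact key k hw

/-- All elements of a finite `K_M[p,q]` are short. -/
lemma KM_finite_bound {p q : Q} (hfin : (KM M p q).Finite) {k : ℕ}
    (hk : thresholdTok k ∈ KM M p q) : k + 1 ≤ Fintype.card Q := by
  by_contra hbig
  have hk' : Fintype.card Q ≤ k := by omega
  have hlang : (Letter.tri :: (List.replicate k Letter.one ++ [Letter.dollar]))
      ∈ (M.between p q).lang := hk.1
  obtain ⟨a, c, d, habc, hc, hpump⟩ := tok_pump hlang hk'
  refine unbounded_length_infinite (fun N => ?_) hfin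
  refine ⟨thresholdTok (a + N * c + d), ⟨hpump N, ⟨_, rfl⟩⟩, ?_⟩
  rw [thresholdTok_length]
  have : N ≤ N * c := Nat.le_mul_of_pos_right N hc
  omega

/-- All elements of a finite `V_M[p,q]` are short. -/
lemma VM_finite_bound {p q : Q} (hfin : (VM M p q).Finite) {v : Word}
    (hv : v ∈ VM M p q) : nameOf v + 1 ≤ Fintype.card Q := by
  by_contra hbig
  rcases hv.2 with ⟨a, ha⟩ | ⟨a, ha⟩
  all_goals (
    subst ha
    first
      | rw [nameOf_leftTok] at hbig
      | rw [nameOf_rightTok] at hbig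
    have hk' : Fintype.card Q ≤ a := by omega
    have hlang := hv.1
    obtain ⟨a', c, d, habc, hc, hpump⟩ := tok_pump hlang hk'
    refine unbounded_length_infinite (fun N => ?_) hfin)
  · refine ⟨leftTok (a' + N * c + d), ⟨hpump N, Or.inl ⟨_, rfl⟩⟩, ?_⟩
    rw [leftTok_length]
    have : N ≤ N * c := Nat.le_mul_of_pos_right N hc
    omega
  · refine ⟨rightTok (a' + N * c + d), ⟨hpump N, Or.inr ⟨_, rfl⟩⟩, ?_⟩
    rw [rightTok_length]
    have : N ≤ N * c := Nat.le_mul_of_pos_right N hc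
    omega

end Pumping

section Shortlex

def lexNat (w : Word) : ℕ := w.foldl (fun n a => 5 * n + letterIdx a) 0

lemma letterIdx_le4 (a : Letter) : letterIdx a ≤ 4 := by cases a <;> simp [letterIdx]

lemma letterIdx_inj {a b : Letter} (h : letterIdx a = letterIdx b) : a = b := by
  cases a <;> cases b <;> first | rfl | (exfalso; simp [letterIdx] at h)

lemma foldl_lex_acc (w : Word) (n : ℕ) :
    w.foldl (fun n a => 5 * n + letterIdx a) n = n * 5 ^ w.length + lexNat w := by
  induction w generalizing n with
  | nil => simp [lexNat]
  | cons a w ih =>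
    show w.foldl _ (5 * n + letterIdx a) = _
    rw [ih]
    have h2 : lexNat (a :: w) = letterIdx a * 5 ^ w.length + lexNat w := by
      show w.foldl _ (5 * 0 + letterIdx a) = _
      rw [ih]
      ring_nf
    rw [h2]
    simp [List.length_cons, pow_succ]
    ring

lemma lexNat_cons (a : Letter) (w : Word) :
    lexNat (a :: w) = letterIdx a * 5 ^ w.length + lexNat w := by
  show w.foldl _ (5 * 0 + letterIdx a) = _
  rw [foldl_lex_acc]
  ring_nf

lemma lexNat_lt_pow (w : Word) : lexNat w < 5 ^ w.length := by
  induction w with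
  | nil => simp [lexNat]
  | cons a w ih =>
    rw [lexNat_cons]
    have h1 := letterIdx_le4 a
    have h2 : 5 ^ (a :: w).length = 5 * 5 ^ w.length := by
      simp [List.length_cons, pow_succ]; ring
    rw [h2]
    nlinarith

lemma mul_pow_cancel {A B X Y C : ℕ} (hX : X < C) (hY : Y < C)
    (h : A * C + X = B * C + Y) : A = B ∧ X = Y := by
  rcases Nat.lt_trichotomy A B with hAB | hAB | hAB
  · exfalso
    have : A * C + X < B * C + Y := by
      calc A * C + X < A * C + C := by omega
        _ = (A + 1) * C := by ring
        _ ≤ B * C := Nat.mul_le_mul_right C (by omega)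
        _ ≤ B * C + Y := by omega
    omega
  · constructor
    · exact hAB
    · subst hAB; omega
  · exfalso
    have : B * C + Y < A * C + X := by
      calc B * C + Y < B * C + C := by omega
        _ = (B + 1) * C := by ring
        _ ≤ A * C := Nat.mul_le_mul_right C (by omega)
        _ ≤ A * C + X := by omega
    omega

lemma lexNat_inj : ∀ {u v : Word}, u.length = v.length → lexNat u = lexNat v → u = v := by
  intro u
  induction u with
  | nil =>
    intro v hl _
    cases v with
    | nil => rfl
    | cons b v => simp at hl
  | cons a u ih =>
    intro v hl he
    cases v with
    | nil => simp at hl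
    | cons b v =>
      simp only [List.length_cons] at hl
      rw [lexNat_cons, lexNat_cons] at he
      have hl' : u.length = v.length := by omega
      rw [hl'] at he
      obtain ⟨h1, h2⟩ := mul_pow_cancel (hl' ▸ lexNat_lt_pow u) (lexNat_lt_pow v) he
      rw [letterIdx_inj h1, ih hl' h2]

lemma lex_of_lexNat_lt : ∀ {u v : Word}, u.length = v.length → lexNat u < lexNat v →
    List.Lex (fun a b => letterIdx a < letterIdx b) u v := by
  intro u
  induction u with
  | nil =>
    intro v hl h
    cases v with
    | nil => simp [lexNat] at h
    | cons b v => simp at hl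
  | cons a u ih =>
    intro v hl h
    cases v with
    | nil => simp at hl
    | cons b v =>
      simp only [List.length_cons] at hl
      rw [lexNat_cons, lexNat_cons] at h
      have hl' : u.length = v.length := by omega
      rw [hl'] at h
      rcases Nat.lt_trichotomy (letterIdx a) (letterIdx b) with hab | hab | hab
      · exact List.Lex.rel hab
      · rw [letterIdx_inj hab]
        refine List.Lex.cons (ih hl' ?_)
        rw [hab] at h
        omega
      · exfalso
        have hX := lexNat_lt_pow u
        rw [hl'] at hX
        have hY := lexNat_lt_pow v
        have : (letterIdx b + 1) * 5 ^ v.length ≤ letterIdx a * 5 ^ v.length :=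
          Nat.mul_le_mul_right _ (by omega)
        nlinarith

open Classical in
lemma exists_nat_min (P : ℕ → Prop) (h : ∃ n, P n) : ∃ n, P n ∧ ∀ m, P m → n ≤ m :=
  ⟨Nat.find h, Nat.find_spec h, fun m hm => Nat.find_min' h hm⟩

lemma exists_isSlLeast {S : Set Word} (h : S.Nonempty) : ∃ w, IsSlLeast S w := by
  obtain ⟨n₀, ⟨w₁, hw₁, hl₁⟩, hn₀⟩ :=
    exists_nat_min (fun n => ∃ w ∈ S, w.length = n) ⟨h.choose.length, h.choose, h.choose_spec, rfl⟩
  obtain ⟨m₀, ⟨w₀, hw₀, hl₀, hm₀eq⟩, hm₀⟩ :=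
    exists_nat_min (fun m => ∃ w ∈ S, w.length = n₀ ∧ lexNat w = m) ⟨lexNat w₁, w₁, hw₁, hl₁, rfl⟩
  refine ⟨w₀, hw₀, fun v hv => ?_⟩
  have hvlen : n₀ ≤ v.length := hn₀ v.length ⟨v, hv, rfl⟩
  rcases Nat.lt_or_ge n₀ v.length with hlt | hge
  · exact Or.inl (Or.inl (hl₀ ▸ hlt))
  · have hveq : v.length = n₀ := by omega
    have hmle : m₀ ≤ lexNat v := hm₀ (lexNat v) ⟨v, hv, hveq, rfl⟩
    rcases Nat.lt_or_ge m₀ (lexNat v) with hmlt | hmge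
    · refine Or.inl (Or.inr ⟨by omega, ?_⟩)
      exact lex_of_lexNat_lt (by omega) (hm₀eq ▸ hmlt)
    · have hveq2 : lexNat v = m₀ := by omega
      exact Or.inr (lexNat_inj (by omega) (by rw [hm₀eq, hveq2]))

lemma slLE_length {u v : Word} (h : slLE u v) : u.length ≤ v.length := by
  rcases h with (h | ⟨h, _⟩) | rfl
  · omega
  · omega
  · exact le_refl _

end Shortlex

section EncodeStructure

lemma flatMap_pairs_flatten (es : List (ℕ × ℕ)) (f g : ℕ × ℕ → Word) :
    (es.flatMap fun e => [f e, g e]).flatten = (es.map fun e => f e ++ g e).flatten := by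
  induction es with
  | nil => rfl
  | cons e es ih => simp [ih]

lemma encode_eq_flatten (k : ℕ) (es : List (ℕ × ℕ)) :
    encode k es = (thresholdTok k :: es.flatMap fun e => [leftTok e.1, rightTok e.2]).flatten := by
  rw [List.flatten_cons, flatMap_pairs_flatten]
  rfl

lemma flatMap_pairs_length (es : List (ℕ × ℕ)) (f g : ℕ × ℕ → Word) :
    (es.flatMap fun e => [f e, g e]).length = 2 * es.length := by
  induction es with
  | nil => rfl
  | cons e es ih => simp [ih]; omega

lemma flatMap_pairs_getD_even (es : List (ℕ × ℕ)) (f g : ℕ × ℕ → Word) (d : Word) :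
    ∀ j, j < es.length →
      (es.flatMap fun e => [f e, g e]).getD (2 * j) d = f (es.getD j (0, 0)) := by
  induction es with
  | nil => intro j hj; simp at hj
  | cons e es ih =>
    intro j hj
    cases j with
    | zero => rfl
    | succ j =>
      have h2 : 2 * (j + 1) = (2 * j) + 1 + 1 := by omega
      rw [h2]
      show (es.flatMap fun e => [f e, g e]).getD (2 * j) d = _
      exact ih j (by simpa using Nat.lt_of_succ_lt_succ hj)

lemma flatMap_pairs_getD_odd (es : List (ℕ × ℕ)) (f g : ℕ × ℕ → Word) (d : Word) :
    ∀ j, j < es.length →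
      (es.flatMap fun e => [f e, g e]).getD (2 * j + 1) d = g (es.getD j (0, 0)) := by
  induction es with
  | nil => intro j hj; simp at hj
  | cons e es ih =>
    intro j hj
    cases j with
    | zero => rfl
    | succ j =>
      have h2 : 2 * (j + 1) + 1 = (2 * j + 1) + 1 + 1 := by omega
      rw [h2]
      show (es.flatMap fun e => [f e, g e]).getD (2 * j + 1) d = _
      exact ih j (by simpa using Nat.lt_of_succ_lt_succ hj)

lemma ChainFrom.cons_elim {Q : Type} {M : NFA' Q} {p q : Q} {u : Word} {us : List Word}
    (h : ChainFrom M p (u :: us) q) :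
    ∃ r, u ∈ (M.between p r).lang ∧ ChainFrom M r us q := by
  cases h with
  | cons _ hu hc => exact ⟨_, hu, hc⟩

/-- Destructure a chain along the edge tokens of an encoding. -/
lemma chain_flatMap_elim {Q : Type} {M : NFA' Q} :
    ∀ (l : List (ℕ × ℕ)) (p q : Q),
      ChainFrom M p (l.flatMap fun e => [leftTok e.1, rightTok e.2]) q →
      ∃ st : ℕ → Q, st 0 = p ∧ st (2 * l.length) = q ∧
        ∀ j, j < l.length →
          leftTok (l.getD j (0, 0)).1 ∈ (M.between (st (2 * j)) (st (2 * j + 1))).lang ∧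
          rightTok (l.getD j (0, 0)).2 ∈ (M.between (st (2 * j + 1)) (st (2 * j + 2))).lang := by
  intro l
  induction l with
  | nil =>
    intro p q h
    cases h
    exact ⟨fun _ => p, rfl, rfl, by intro j hj; simp at hj⟩
  | cons e l ih =>
    intro p q h
    rw [show ((e :: l).flatMap fun e => [leftTok e.1, rightTok e.2])
        = leftTok e.1 :: rightTok e.2 :: (l.flatMap fun e => [leftTok e.1, rightTok e.2]) by
      simp] at h
    obtain ⟨r, hu, h1⟩ := h.cons_elim
    obtain ⟨r2, hv, h2⟩ := h1.cons_elim
    obtain ⟨st, h0, hend, hslots⟩ := ih r2 q h2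
    (
        refine ⟨fun n => if n = 0 then p else if n = 1 then r else st (n - 2), rfl, ?_, ?_⟩
        · have : 2 * (e :: l).length = 2 * l.length + 2 := by simp; omega
          rw [this]
          simpa using hend
        · intro j hj
          cases j with
          | zero =>
            constructor
            · simpa using hu
            · simpa [h0] using hv
          | succ j =>
            have hj' : j < l.length := by simpa using Nat.lt_of_succ_lt_succ hj
            have e1 : 2 * (j + 1) = 2 * j + 2 := by omega
            have e2 : 2 * (j + 1) + 1 = 2 * j + 1 + 2 := by omega
            have e3 : 2 * (j + 1) + 2 = 2 * j + 2 + 2 := by omega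
            rw [e3, e2, e1]
            simp only [if_neg (by omega : ¬ 2 * j + 2 = 0), if_neg (by omega : ¬ 2 * j + 2 = 1),
              if_neg (by omega : ¬ 2 * j + 1 + 2 = 0), if_neg (by omega : ¬ 2 * j + 1 + 2 = 1),
              if_neg (by omega : ¬ 2 * j + 2 + 2 = 0), if_neg (by omega : ¬ 2 * j + 2 + 2 = 1)]
            have e4 : 2 * j + 2 - 2 = 2 * j := by omega
            have e5 : 2 * j + 1 + 2 - 2 = 2 * j + 1 := by omega
            have e6 : 2 * j + 2 + 2 - 2 = 2 * j + 2 := by omega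
            rw [e4, e5, e6]
            exact ⟨(hslots j hj').1, (hslots j hj').2⟩)

end EncodeStructure

section CoreGraph

lemma graphOf_edge_elim {es : List (ℕ × ℕ)} {e : Sym2 ℕ} (he : e ∈ (graphOf es).E) :
    ∃ x ∈ es, x.1 ≠ x.2 ∧ e = s(x.1, x.2) := by
  rw [graphOf, List.mem_toFinset, List.mem_map] at he
  obtain ⟨x, hx, rfl⟩ := he
  rw [List.mem_filter] at hx
  exact ⟨x, hx.1, by simpa using hx.2, rfl⟩

lemma graphOf_edge_intro {es : List (ℕ × ℕ)} {x : ℕ × ℕ} (hx : x ∈ es) (hne : x.1 ≠ x.2) :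
    s(x.1, x.2) ∈ (graphOf es).E := by
  rw [graphOf, List.mem_toFinset, List.mem_map]
  exact ⟨x, List.mem_filter.2 ⟨hx, by simpa using hne⟩, rfl⟩

lemma graphOf_vert_intro {es : List (ℕ × ℕ)} {x : ℕ × ℕ} (hx : x ∈ es) :
    x.1 ∈ (graphOf es).V ∧ x.2 ∈ (graphOf es).V := by
  constructor <;> rw [graphOf] <;> rw [Finset.mem_union]
  · exact Or.inl (by rw [List.mem_toFinset, List.mem_map]; exact ⟨x, hx, rfl⟩)
  · exact Or.inr (by rw [List.mem_toFinset, List.mem_map]; exact ⟨x, hx, rfl⟩)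

lemma graphOf_vert_elim {es : List (ℕ × ℕ)} {v : ℕ} (hv : v ∈ (graphOf es).V) :
    ∃ x ∈ es, x.1 = v ∨ x.2 = v := by
  rw [graphOf, Finset.mem_union, List.mem_toFinset, List.mem_toFinset] at hv
  rcases hv with h | h <;> rw [List.mem_map] at h <;> obtain ⟨x, hx, rfl⟩ := h
  · exact ⟨x, hx, Or.inl rfl⟩
  · exact ⟨x, hx, Or.inr rfl⟩

lemma mem_getD_of_lt {α : Type*} (l : List α) (j : ℕ) (hj : j < l.length) (d : α) :
    l.getD j d ∈ l := by
  rw [List.getD_eq_getElem l d hj]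
  exact List.getElem_mem hj

lemma exists_getD_of_mem {α : Type*} {l : List α} {x : α} (hx : x ∈ l) (d : α) :
    ∃ j, j < l.length ∧ l.getD j d = x := by
  obtain ⟨i, hi, rfl⟩ := List.mem_iff_getElem.1 hx
  exact ⟨i, hi, List.getD_eq_getElem l d hi⟩

/-- The abstract renaming core: if every new name at a slot that lies in the renamed
set `S₀.image vh` comes from an `S₀`-name at the same slot position, then the renamed
set is independent in the new graph. -/
lemma core_indep {es es' : List (ℕ × ℕ)} (hlen : es'.length = es.length)
    {S S₀ : Finset ℕ} (hS₀ : S₀ ⊆ S)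
    (hindep : ∀ a ∈ S, ∀ b ∈ S, s(a, b) ∉ (graphOf es).E)
    (vh : ℕ → ℕ) (hinj : Set.InjOn vh S₀)
    (hL : ∀ j, j < es.length → (es'.getD j (0, 0)).1 ∈ S₀.image vh →
      (es.getD j (0, 0)).1 ∈ S₀ ∧ (es'.getD j (0, 0)).1 = vh (es.getD j (0, 0)).1)
    (hR : ∀ j, j < es.length → (es'.getD j (0, 0)).2 ∈ S₀.image vh →
      (es.getD j (0, 0)).2 ∈ S₀ ∧ (es'.getD j (0, 0)).2 = vh (es.getD j (0, 0)).2) :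
    ∀ a ∈ S₀.image vh, ∀ b ∈ S₀.image vh, s(a, b) ∉ (graphOf es').E := by
  intro a ha b hb habE
  obtain ⟨x, hx, hne, hxe⟩ := graphOf_edge_elim habE
  obtain ⟨j, hj, hgetD⟩ := exists_getD_of_mem hx (0, 0)
  rw [hlen] at hj
  have hx1 : x.1 ∈ S₀.image vh ∧ x.2 ∈ S₀.image vh := by
    rw [Sym2.eq_iff] at hxe
    rcases hxe with ⟨h1, h2⟩ | ⟨h1, h2⟩
    · rw [← h1, ← h2]; exact ⟨ha, hb⟩
    · rw [← h2, ← h1]; exact ⟨hb, ha⟩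
  obtain ⟨hmem1, heq1⟩ := hL j hj (by rw [hgetD]; exact hx1.1)
  obtain ⟨hmem2, heq2⟩ := hR j hj (by rw [hgetD]; exact hx1.2)
  rw [hgetD] at heq1 heq2
  have hpq : (es.getD j (0, 0)).1 ≠ (es.getD j (0, 0)).2 := by
    intro h
    rw [heq1, heq2, h] at hne
    exact hne rfl
  exact hindep _ (hS₀ hmem1) _ (hS₀ hmem2)
    (graphOf_edge_intro (mem_getD_of_lt es j hj (0, 0)) hpq)

end CoreGraph

section PairChoice

set_option linter.unusedSectionVars false

variable {Q : Type} [Fintype Q] {M : NFA' Q}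

lemma pair_choice (hEnc : M.lang ⊆ Enc) (hre : M.Reachable) (hco : M.CoReachable)
    {p q : Q} {PS : Set Word}
    (hsub : PS ⊆ VM M p q) (hncard : PS.ncard = Fintype.card Q + 1)
    (hlong : ∀ w ∈ PS, Fintype.card Q ≤ w.length)
    (A : Finset ℕ) (hA : A.card + 1 ≤ Fintype.card Q) :
    ∃ (f : ℕ → Word) (e : Word),
      (∀ a ∈ A, f a ∈ PS ∧ Fintype.card Q + 2 ≤ (f a).length) ∧
      Set.InjOn f ↑A ∧
      e ∈ PS ∧ (∀ a ∈ A, f a ≠ e) ∧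
      (e.length < Fintype.card Q + 2 → Fintype.card Q ≤ A.card + 1) := by
  classical
  have hfin : PS.Finite := by
    by_contra h
    have h0 : PS.ncard = 0 := Set.Infinite.ncard h
    omega
  set F : Finset Word := hfin.toFinset with hF
  have hFmem : ∀ {u : Word}, u ∈ F ↔ u ∈ PS := fun {u} => hfin.mem_toFinset
  have hFcard : F.card = Fintype.card Q + 1 := by
    rw [← Set.ncard_eq_toFinset_card PS hfin, hncard]
  set safeF : Finset Word := F.filter (fun u => Fintype.card Q + 2 ≤ u.length) with hsafeF
  set unsafeF : Finset Word := F.filter (fun u => ¬ (Fintype.card Q + 2 ≤ u.length)) with hunsafeF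
  have hsplit : safeF.card + unsafeF.card = F.card :=
    Finset.card_filter_add_card_filter_not _
  have hunsafe2 : unsafeF.card ≤ 2 := by
    have : unsafeF.card ≤ ({Fintype.card Q, Fintype.card Q + 1} : Finset ℕ).card := by
      apply Finset.card_le_card_of_injOn (fun u => u.length)
      · intro u hu
        rw [hunsafeF, Finset.mem_coe, Finset.mem_filter] at hu
        have h1 := hlong u (hFmem.1 hu.1)
        have h2 : ¬ (Fintype.card Q + 2 ≤ u.length) := by simpa using hu.2
        simp only [Finset.mem_coe, Finset.mem_insert, Finset.mem_singleton]
        omega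
      · intro u hu v hv hl
        rw [Finset.mem_coe, hunsafeF, Finset.mem_filter] at hu hv
        exact VM_eq_of_length hEnc hre hco (hsub (hFmem.1 hu.1)) (hsub (hFmem.1 hv.1)) hl
    have h2 : ({Fintype.card Q, Fintype.card Q + 1} : Finset ℕ).card ≤ 2 := by
      apply le_trans (Finset.card_insert_le _ _)
      simp
    omega
  have hsafecard : A.card ≤ safeF.card := by omega
  obtain ⟨f, hfsub, hfinj⟩ :=
    Set.Finite.exists_injOn_of_encard_le (s := (↑A : Set ℕ)) (t := (↑safeF : Set Word))
      A.finite_toSet (by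
        rw [Set.encard_coe_eq_coe_finsetCard, Set.encard_coe_eq_coe_finsetCard]
        exact_mod_cast hsafecard)
  have hfmem : ∀ a ∈ A, f a ∈ safeF := by
    intro a ha
    have := hfsub (by exact_mod_cast ha)
    simpa using this
  have hfPS : ∀ a ∈ A, f a ∈ PS ∧ Fintype.card Q + 2 ≤ (f a).length := by
    intro a ha
    have h1 := hfmem a ha
    rw [hsafeF, Finset.mem_filter] at h1
    exact ⟨hFmem.1 h1.1, by simpa using h1.2⟩
  by_cases hcase : ∃ u ∈ safeF, ∀ a ∈ A, f a ≠ u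
  · obtain ⟨u, hu, hune⟩ := hcase
    refine ⟨f, u, hfPS, hfinj, ?_, hune, ?_⟩
    · rw [hsafeF, Finset.mem_filter] at hu
      exact hFmem.1 hu.1
    · intro hshort
      rw [hsafeF, Finset.mem_filter] at hu
      have := hu.2
      omega
  · push_neg at hcase
    have hAcard : Fintype.card Q ≤ A.card + 1 := by
      have hsubsafe : safeF ⊆ A.image f := by
        intro u hu
        obtain ⟨a, ha, hfa⟩ := hcase u hu
        exact Finset.mem_image.2 ⟨a, ha, hfa⟩
      have h1 : safeF.card ≤ (A.image f).card := Finset.card_le_card hsubsafe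
      have h2 : (A.image f).card ≤ A.card := Finset.card_image_le
      omega
    have hex : ∃ e ∈ F, e ∉ A.image f := by
      by_contra hno
      push_neg at hno
      have hsubF : F ⊆ A.image f := hno
      have h1 : F.card ≤ (A.image f).card := Finset.card_le_card hsubF
      have h2 : (A.image f).card ≤ A.card := Finset.card_image_le
      omega
    obtain ⟨e, heF, heimg⟩ := hex
    refine ⟨f, e, hfPS, hfinj, hFmem.1 heF, ?_, fun _ => hAcard⟩
    intro a ha heq
    exact heimg (Finset.mem_image.2 ⟨a, ha, heq⟩)

end PairChoice

section Forward

lemma forward {Q : Type} [Fintype Q] (M : NFA' Q)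
    (hEnc : M.lang ⊆ Enc) (hre : M.Reachable) (hco : M.CoReachable)
    (ps : Q → Q → Set Word)
    (hps : IsPickSeparate (VM M) (Fintype.card Q + 1) (Fintype.card Q) ps)
    (rep : Q → Q → Set Word)
    (hrepdef : ∀ p q : Q, rep p q = pickThreshold (KM M) 0 p q ∪ ps p q)
    {k : ℕ} {es : List (ℕ × ℕ)} (hwL : encode k es ∈ M.lang)
    (hIS : HasIS (graphOf es) k) :
    ∃ w ∈ hatLang M rep, ∃ (G : FinGraph) (k' : ℕ), decodesTo w G k' ∧ HasIS G k' := by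
  classical
  obtain ⟨ord, hordinj, hpscl⟩ := hps
  set cQ := Fintype.card Q with hcQ
  -- run extraction
  obtain ⟨f, hfF, hfev⟩ := hwL
  have hbet : encode k es ∈ (M.between M.q0 f).lang := (M.mem_between_lang_iff).2 hfev
  rw [encode_eq_flatten] at hbet
  obtain ⟨c1, hth, hchain2⟩ := (chainFrom_of_flatten _ _ _ hbet).cons_elim
  obtain ⟨st, hst0, hstend, hslots⟩ := chain_flatMap_elim es c1 f hchain2
  set n := es.length with hn
  set pj : ℕ → ℕ := fun j => (es.getD j (0, 0)).1 with hpj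
  set qj : ℕ → ℕ := fun j => (es.getD j (0, 0)).2 with hqj
  have hVL : ∀ j, j < n → leftTok (pj j) ∈ VM M (st (2 * j)) (st (2 * j + 1)) :=
    fun j hj => ⟨(hslots j hj).1, Or.inl ⟨_, rfl⟩⟩
  have hVR : ∀ j, j < n → rightTok (qj j) ∈ VM M (st (2 * j + 1)) (st (2 * j + 2)) :=
    fun j hj => ⟨(hslots j hj).2, Or.inr ⟨_, rfl⟩⟩
  -- threshold token
  have hKM : thresholdTok k ∈ KM M M.q0 c1 := ⟨hth, _, rfl⟩
  obtain ⟨k₀, ht₀mem, hk₀k, hk₀card⟩ :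
      ∃ k₀, thresholdTok k₀ ∈ pickThreshold (KM M) 0 M.q0 c1 ∧ k₀ ≤ k ∧ k₀ + 1 ≤ cQ := by
    by_cases hKfin : (KM M M.q0 c1).Finite
    · exact ⟨k, Or.inl ⟨hKfin, hKM⟩, le_refl k, KM_finite_bound hKfin hKM⟩
    · obtain ⟨w₀, hw₀⟩ := exists_isSlLeast (⟨_, hKM⟩ : (KM M M.q0 c1).Nonempty)
      obtain ⟨k₀, hk₀eq⟩ := hw₀.1.2
      subst hk₀eq
      have hseteq : {v | v ∈ KM M M.q0 c1 ∧ 0 ≤ v.length} = KM M M.q0 c1 := by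
        ext v; simp
      refine ⟨k₀, Or.inr ⟨hKfin, ?_⟩, ?_, ?_⟩
      · rw [hseteq]
        exact hw₀
      · have := slLE_length (hw₀.2 _ hKM)
        rw [thresholdTok_length, thresholdTok_length] at this
        omega
      · obtain ⟨k', hk', hmem'⟩ := KM_exists_short ⟨_, hKM⟩
        have := slLE_length (hw₀.2 _ hmem')
        rw [thresholdTok_length, thresholdTok_length] at this
        omega
  -- independent set
  obtain ⟨S, hSsub, hSk, hSind⟩ := hIS
  obtain ⟨S₀, hS₀S, hS₀card⟩ := Finset.exists_subset_card_eq (le_trans hk₀k hSk)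
  -- pairs
  set PL : ℕ → Q × Q := fun j => (st (2 * j), st (2 * j + 1)) with hPL
  set PR : ℕ → Q × Q := fun j => (st (2 * j + 1), st (2 * j + 2)) with hPR
  set NP : Q × Q → Finset ℕ := fun P =>
    ((Finset.range n).filter (fun j => PL j = P)).image pj ∪
    ((Finset.range n).filter (fun j => PR j = P)).image qj with hNP
  set A : Q × Q → Finset ℕ := fun P => S₀ ∩ NP P with hA
  have hAS₀ : ∀ P, A P ⊆ S₀ := fun P => Finset.inter_subset_left
  have hAcard : ∀ P, (A P).card + 1 ≤ cQ := by
    intro P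
    have h1 : (A P).card ≤ S₀.card := Finset.card_le_card (hAS₀ P)
    omega
  -- membership facts for NP
  have hNPL : ∀ j, j < n → pj j ∈ NP (PL j) := by
    intro j hj
    refine Finset.mem_union.2 (Or.inl (Finset.mem_image.2 ⟨j, ?_, rfl⟩))
    exact Finset.mem_filter.2 ⟨Finset.mem_range.2 hj, rfl⟩
  have hNPR : ∀ j, j < n → qj j ∈ NP (PR j) := by
    intro j hj
    refine Finset.mem_union.2 (Or.inr (Finset.mem_image.2 ⟨j, ?_, rfl⟩))
    exact Finset.mem_filter.2 ⟨Finset.mem_range.2 hj, rfl⟩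
  -- per-pair choice
  have hchoice : ∀ P : Q × Q, ∃ (g : ℕ → Word) (e : Word), ¬ (VM M P.1 P.2).Finite →
      ((∀ a ∈ A P, g a ∈ ps P.1 P.2 ∧ cQ + 2 ≤ (g a).length) ∧
       Set.InjOn g ↑(A P) ∧
       e ∈ ps P.1 P.2 ∧ (∀ a ∈ A P, g a ≠ e) ∧
       (e.length < cQ + 2 → cQ ≤ (A P).card + 1)) := by
    intro P
    by_cases hf : (VM M P.1 P.2).Finite
    · exact ⟨fun _ => [], [], fun h => absurd hf h⟩
    · obtain ⟨hcl1, hcl2, _⟩ := (hpscl P.1 P.2).2 hf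
      obtain ⟨g, e, hg⟩ := pair_choice hEnc hre hco (p := P.1) (q := P.2)
        (PS := ps P.1 P.2) (fun w hw => (hcl1 w hw).1) hcl2
        (fun w hw => (hcl1 w hw).2.1) (A P) (hAcard P)
      exact ⟨g, e, fun _ => hg⟩
  choose tokf xtr htokf using hchoice
  set Inf : Q × Q → Prop := fun P => ¬ (VM M P.1 P.2).Finite with hInf
  -- new tokens
  set newL : ℕ → Word := fun j =>
    if Inf (PL j) then (if pj j ∈ S₀ then tokf (PL j) (pj j) else xtr (PL j))
    else leftTok (pj j) with hnewL
  set newR : ℕ → Word := fun j =>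
    if Inf (PR j) then (if qj j ∈ S₀ then tokf (PR j) (qj j) else xtr (PR j))
    else rightTok (qj j) with hnewR
  -- basic facts about the new tokens
  have hLVMrep : ∀ j, j < n →
      newL j ∈ VM M (PL j).1 (PL j).2 ∧ newL j ∈ rep (PL j).1 (PL j).2 := by
    intro j hj
    rw [hrepdef]
    by_cases hInfj : Inf (PL j)
    · obtain ⟨hg, _, hxtr, _, _⟩ := htokf (PL j) hInfj
      by_cases hpS : pj j ∈ S₀
      · have hAm : pj j ∈ A (PL j) := Finset.mem_inter.2 ⟨hpS, hNPL j hj⟩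
        have h1 := hg (pj j) hAm
        have hnewLeq : newL j = tokf (PL j) (pj j) := by
          rw [hnewL]; simp only [if_pos hInfj, if_pos hpS]
        rw [hnewLeq]
        exact ⟨(((hpscl _ _).2 hInfj).1 _ h1.1).1, Or.inr h1.1⟩
      · have hnewLeq : newL j = xtr (PL j) := by
          rw [hnewL]; simp only [if_pos hInfj, if_neg hpS]
        rw [hnewLeq]
        exact ⟨(((hpscl _ _).2 hInfj).1 _ hxtr).1, Or.inr hxtr⟩
    · have hfin : (VM M (PL j).1 (PL j).2).Finite := not_not.1 hInfj
      have hnewLeq : newL j = leftTok (pj j) := by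
        rw [hnewL]; simp only [if_neg hInfj]
      rw [hnewLeq]
      refine ⟨hVL j hj, Or.inr ?_⟩
      rw [(hpscl _ _).1 hfin]
      exact hVL j hj
  have hRVMrep : ∀ j, j < n →
      newR j ∈ VM M (PR j).1 (PR j).2 ∧ newR j ∈ rep (PR j).1 (PR j).2 := by
    intro j hj
    rw [hrepdef]
    by_cases hInfj : Inf (PR j)
    · obtain ⟨hg, _, hxtr, _, _⟩ := htokf (PR j) hInfj
      by_cases hqS : qj j ∈ S₀
      · have hAm : qj j ∈ A (PR j) := Finset.mem_inter.2 ⟨hqS, hNPR j hj⟩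
        have h1 := hg (qj j) hAm
        have hnewReq : newR j = tokf (PR j) (qj j) := by
          rw [hnewR]; simp only [if_pos hInfj, if_pos hqS]
        rw [hnewReq]
        exact ⟨(((hpscl _ _).2 hInfj).1 _ h1.1).1, Or.inr h1.1⟩
      · have hnewReq : newR j = xtr (PR j) := by
          rw [hnewR]; simp only [if_pos hInfj, if_neg hqS]
        rw [hnewReq]
        exact ⟨(((hpscl _ _).2 hInfj).1 _ hxtr).1, Or.inr hxtr⟩
    · have hfin : (VM M (PR j).1 (PR j).2).Finite := not_not.1 hInfj
      have hnewReq : newR j = rightTok (qj j) := by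
        rw [hnewR]; simp only [if_neg hInfj]
      rw [hnewReq]
      refine ⟨hVR j hj, Or.inr ?_⟩
      rw [(hpscl _ _).1 hfin]
      exact hVR j hj
  have hLleft : ∀ j, j < n → newL j = leftTok (nameOf (newL j)) := by
    intro j hj
    rcases VM_same_side hEnc hre hco (hLVMrep j hj).1 (hVL j hj)
      with ⟨a, b, ha, hb⟩ | ⟨a, b, ha, hb⟩
    · rw [ha, nameOf_leftTok]
    · exact absurd hb (leftTok_ne_rightTok _ _)
  have hRright : ∀ j, j < n → newR j = rightTok (nameOf (newR j)) := by
    intro j hj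
    rcases VM_same_side hEnc hre hco (hRVMrep j hj).1 (hVR j hj)
      with ⟨a, b, ha, hb⟩ | ⟨a, b, ha, hb⟩
    · exact absurd hb.symm (leftTok_ne_rightTok _ _)
    · rw [ha, nameOf_rightTok]
  -- new edge list
  set Lnm : ℕ → ℕ := fun j => nameOf (newL j) with hLnm
  set Rnm : ℕ → ℕ := fun j => nameOf (newR j) with hRnm
  set es' : List (ℕ × ℕ) := List.ofFn (fun i : Fin n => (Lnm i, Rnm i)) with hes'
  have hes'len : es'.length = n := by simp [hes']
  have hes'getD : ∀ j, j < n → es'.getD j (0, 0) = (Lnm j, Rnm j) := by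
    intro j hj
    rw [hes', List.getD_eq_getElem _ _ (by simpa using hj)]
    simp
  -- membership of the new encoding in the hat language
  set us' : List Word := thresholdTok k₀ :: es'.flatMap (fun e => [leftTok e.1, rightTok e.2])
    with hus'
  have hency : encode k₀ es' = us'.flatten := encode_eq_flatten k₀ es'
  have hus'len : us'.length = 2 * n + 1 := by
    rw [hus', List.length_cons, flatMap_pairs_length, hes'len]
  have hhat : encode k₀ es' ∈ hatLang M rep := by
    rw [hency]
    apply hatLang_intro us' (fun i => if i = 0 then M.q0 else st (i - 1)) (by simp)
    · rw [hus'len]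
      simp only [if_neg (by omega : ¬ 2 * n + 1 = 0)]
      have h1 : 2 * n + 1 - 1 = 2 * n := by omega
      rw [h1, hstend]
      exact hfF
    · intro i hi
      rw [hus'len] at hi
      rcases Nat.eq_zero_or_pos i with rfl | hipos
      · show thresholdTok k₀ ∈ rep _ _
        simp only [if_pos rfl, if_neg (by omega : ¬ (1:ℕ) = 0)]
        have h1 : (1:ℕ) - 1 = 0 := by omega
        rw [h1, hst0, hrepdef]
        exact Or.inl ht₀mem
      · obtain ⟨j, rfl | rfl⟩ : ∃ j, i = 2 * j + 1 ∨ i = 2 * j + 2 := ⟨(i - 1) / 2, by omega⟩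
        · have hj : j < n := by omega
          have hj' : j < es'.length := by omega
          have hgd : us'.getD (2 * j + 1) [] = leftTok (es'.getD j (0, 0)).1 := by
            rw [hus']
            show (es'.flatMap fun e => [leftTok e.1, rightTok e.2]).getD (2 * j) [] = _
            exact flatMap_pairs_getD_even es' _ _ [] j hj'
          rw [hgd, hes'getD j hj]
          simp only [if_neg (by omega : ¬ 2 * j + 1 = 0), if_neg (by omega : ¬ 2 * j + 1 + 1 = 0)]
          have h1 : 2 * j + 1 - 1 = 2 * j := by omega
          have h2 : 2 * j + 1 + 1 - 1 = 2 * j + 1 := by omega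
          rw [h1, h2]
          have h3 : leftTok (Lnm j, Rnm j).1 = newL j := (hLleft j hj).symm
          rw [h3]
          exact (hLVMrep j hj).2
        · have hj : j < n := by omega
          have hj' : j < es'.length := by omega
          have hgd : us'.getD (2 * j + 2) [] = rightTok (es'.getD j (0, 0)).2 := by
            rw [hus']
            show (es'.flatMap fun e => [leftTok e.1, rightTok e.2]).getD (2 * j + 1) [] = _
            exact flatMap_pairs_getD_odd es' _ _ [] j hj'
          rw [hgd, hes'getD j hj]
          simp only [if_neg (by omega : ¬ 2 * j + 2 = 0), if_neg (by omega : ¬ 2 * j + 2 + 1 = 0)]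
          have h1 : 2 * j + 2 - 1 = 2 * j + 1 := by omega
          have h2 : 2 * j + 2 + 1 - 1 = 2 * j + 2 := by omega
          rw [h1, h2]
          have h3 : rightTok (Lnm j, Rnm j).2 = newR j := (hRright j hj).symm
          rw [h3]
          exact (hRVMrep j hj).2
  -- name bounds
  have hLfresh : ∀ j, j < n → Inf (PL j) → pj j ∈ S₀ →
      cQ ≤ Lnm j ∧ newL j = tokf (PL j) (pj j) := by
    intro j hj hInfj hpS
    have hAm : pj j ∈ A (PL j) := Finset.mem_inter.2 ⟨hpS, hNPL j hj⟩
    have h1 := (htokf (PL j) hInfj).1 (pj j) hAm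
    have hnewLeq : newL j = tokf (PL j) (pj j) := by
      rw [hnewL]; simp only [if_pos hInfj, if_pos hpS]
    refine ⟨?_, hnewLeq⟩
    have h2 := h1.2
    have h3 : Lnm j = (newL j).length - 2 := rfl
    rw [hnewLeq] at h3
    omega
  have hRfresh : ∀ j, j < n → Inf (PR j) → qj j ∈ S₀ →
      cQ ≤ Rnm j ∧ newR j = tokf (PR j) (qj j) := by
    intro j hj hInfj hqS
    have hAm : qj j ∈ A (PR j) := Finset.mem_inter.2 ⟨hqS, hNPR j hj⟩
    have h1 := (htokf (PR j) hInfj).1 (qj j) hAm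
    have hnewReq : newR j = tokf (PR j) (qj j) := by
      rw [hnewR]; simp only [if_pos hInfj, if_pos hqS]
    refine ⟨?_, hnewReq⟩
    have h2 := h1.2
    have h3 : Rnm j = (newR j).length - 2 := rfl
    rw [hnewReq] at h3
    omega
  have hLkept : ∀ j, j < n → ¬ Inf (PL j) → Lnm j = pj j ∧ pj j + 1 ≤ cQ := by
    intro j hj hInfj
    have hnewLeq : newL j = leftTok (pj j) := by
      rw [hnewL]; simp only [if_neg hInfj]
    constructor
    · show nameOf (newL j) = pj j
      rw [hnewLeq, nameOf_leftTok]
    · have := VM_finite_bound (not_not.1 hInfj) (hVL j hj)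
      rwa [nameOf_leftTok] at this
  have hRkept : ∀ j, j < n → ¬ Inf (PR j) → Rnm j = qj j ∧ qj j + 1 ≤ cQ := by
    intro j hj hInfj
    have hnewReq : newR j = rightTok (qj j) := by
      rw [hnewR]; simp only [if_neg hInfj]
    constructor
    · show nameOf (newR j) = qj j
      rw [hnewReq, nameOf_rightTok]
    · have := VM_finite_bound (not_not.1 hInfj) (hVR j hj)
      rwa [nameOf_rightTok] at this
  -- occurrences at infinite slots
  set InfOcc : ℕ → Prop := fun v =>
    ∃ j, j < n ∧ ((Inf (PL j) ∧ pj j = v) ∨ (Inf (PR j) ∧ qj j = v)) with hInfOccDef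
  have hNPInf : ∀ P v, Inf P → v ∈ NP P → InfOcc v := by
    intro P v hP hv
    rcases Finset.mem_union.1 hv with h | h
    · obtain ⟨j, hj, rfl⟩ := Finset.mem_image.1 h
      obtain ⟨hjr, hPLj⟩ := Finset.mem_filter.1 hj
      exact ⟨j, Finset.mem_range.1 hjr, Or.inl ⟨by rw [hPLj]; exact hP, rfl⟩⟩
    · obtain ⟨j, hj, rfl⟩ := Finset.mem_image.1 h
      obtain ⟨hjr, hPRj⟩ := Finset.mem_filter.1 hj
      exact ⟨j, Finset.mem_range.1 hjr, Or.inr ⟨by rw [hPRj]; exact hP, rfl⟩⟩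
  -- the renaming function
  have hvhex : ∀ v : ℕ, ∃ m : ℕ,
      ((v ∈ S₀ ∧ InfOcc v) → ∃ P : Q × Q, Inf P ∧ v ∈ A P ∧ m = nameOf (tokf P v) ∧ cQ ≤ m) ∧
      (¬ (v ∈ S₀ ∧ InfOcc v) → m = v) := by
    intro v
    by_cases h : v ∈ S₀ ∧ InfOcc v
    · obtain ⟨hvS₀, j, hj, hcase⟩ := h
      have key : ∃ P : Q × Q, Inf P ∧ v ∈ A P := by
        rcases hcase with ⟨hPinf, hpv⟩ | ⟨hPinf, hqv⟩
        · exact ⟨PL j, hPinf, Finset.mem_inter.2 ⟨hvS₀, hpv ▸ hNPL j hj⟩⟩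
        · exact ⟨PR j, hPinf, Finset.mem_inter.2 ⟨hvS₀, hqv ▸ hNPR j hj⟩⟩
      obtain ⟨P, hPinf, hvA⟩ := key
      have h1 := (htokf P hPinf).1 v hvA
      refine ⟨nameOf (tokf P v), fun _ => ⟨P, hPinf, hvA, rfl, ?_⟩, fun hc => absurd ?_ hc⟩
      · have h3 : nameOf (tokf P v) = (tokf P v).length - 2 := rfl
        have h2 := h1.2
        omega
      · rcases hcase with ⟨hPinf', hpv⟩ | ⟨hPinf', hqv⟩
        · exact ⟨hvS₀, j, hj, Or.inl ⟨hPinf', hpv⟩⟩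
        · exact ⟨hvS₀, j, hj, Or.inr ⟨hPinf', hqv⟩⟩
    · exact ⟨v, fun hc => absurd hc h, fun _ => rfl⟩
  choose vh hvh using hvhex
  -- kept-only names are small
  have hkeptonly : ∀ v ∈ S₀, ¬ InfOcc v → v + 1 ≤ cQ := by
    intro v hv hno
    obtain ⟨x, hx, hside⟩ := graphOf_vert_elim (hSsub (hS₀S hv))
    obtain ⟨j, hj, hgd⟩ := exists_getD_of_mem hx (0, 0)
    rcases hside with h1 | h1
    · have hpv : pj j = v := by show (es.getD j (0, 0)).1 = v; rw [hgd]; exact h1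
      have hnotInf : ¬ Inf (PL j) := fun hI => hno ⟨j, hj, Or.inl ⟨hI, hpv⟩⟩
      have := (hLkept j hj hnotInf).2
      omega
    · have hqv : qj j = v := by show (es.getD j (0, 0)).2 = v; rw [hgd]; exact h1
      have hnotInf : ¬ Inf (PR j) := fun hI => hno ⟨j, hj, Or.inr ⟨hI, hqv⟩⟩
      have := (hRkept j hj hnotInf).2
      omega
  -- cross-pair and same-pair name separation
  have hpsVM : ∀ P : Q × Q, Inf P → ∀ u ∈ ps P.1 P.2, u ∈ VM M P.1 P.2 :=
    fun P hP u hu => (((hpscl P.1 P.2).2 hP).1 u hu).1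
  have hcross : ∀ P P' : Q × Q, Inf P → Inf P' → P ≠ P' →
      ∀ u ∈ ps P.1 P.2, ∀ u' ∈ ps P'.1 P'.2, nameOf u = nameOf u' → False := by
    intro P P' hP hP' hne u hu u' hu' hname
    have hVu := hpsVM P hP u hu
    have hVu' := hpsVM P' hP' u' hu'
    have hdrop : u.dropLast = u'.dropLast := vertTok_dropLast_eq hVu.2 hVu'.2 hname
    have hordne : ord (P'.1, P'.2) ≠ ord (P.1, P.2) := by
      intro h
      have h2 := hordinj h
      rw [Prod.mk.eta, Prod.mk.eta] at h2
      exact hne h2.symm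
    rcases Nat.lt_or_ge (ord (P'.1, P'.2)) (ord (P.1, P.2)) with hlt | hge
    · exact (((hpscl P.1 P.2).2 hP).1 u hu).2.2 P'.1 P'.2 hlt u' hu' hdrop.symm
    · have hlt' : ord (P.1, P.2) < ord (P'.1, P'.2) := by omega
      exact (((hpscl P'.1 P'.2).2 hP').1 u' hu').2.2 P.1 P.2 hlt' u hu hdrop
  have hsamepair : ∀ P : Q × Q, Inf P → ∀ u ∈ ps P.1 P.2, ∀ u' ∈ ps P.1 P.2,
      nameOf u = nameOf u' → u = u' := by
    intro P hP u hu u' hu' hname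
    have hVu := hpsVM P hP u hu
    have hVu' := hpsVM P hP u' hu'
    apply VM_eq_of_length hEnc hre hco hVu hVu'
    rw [vertTok_length hVu.2, vertTok_length hVu'.2, hname]
  -- the two shapes of vh
  have hvhcases : ∀ v ∈ S₀, (¬ InfOcc v ∧ vh v = v ∧ v + 1 ≤ cQ) ∨
      (∃ P, Inf P ∧ v ∈ A P ∧ vh v = nameOf (tokf P v) ∧ cQ ≤ vh v) := by
    intro v hv
    by_cases h : InfOcc v
    · exact Or.inr ((hvh v).1 ⟨hv, h⟩)
    · exact Or.inl ⟨h, (hvh v).2 (fun hc => h hc.2), hkeptonly v hv h⟩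
  -- injectivity of vh on S₀
  have hvhinj : Set.InjOn vh ↑S₀ := by
    intro u hu v hv heq
    have hu' : u ∈ S₀ := hu
    have hv' : v ∈ S₀ := hv
    rcases hvhcases u hu' with ⟨_, hu1, hu2⟩ | ⟨P, hP, huA, hu1, hu2⟩ <;>
      rcases hvhcases v hv' with ⟨_, hv1, hv2⟩ | ⟨P', hP', hvA, hv1, hv2⟩
    · rw [hu1, hv1] at heq; exact heq
    · omega
    · omega
    · by_cases hPP : P = P'
      · subst hPP
        have hteq : tokf P u = tokf P v :=
          hsamepair P hP _ ((htokf P hP).1 u huA).1 _ ((htokf P hP).1 v hvA).1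
            (by rw [← hu1, ← hv1, heq])
        exact (htokf P hP).2.1 (Finset.mem_coe.2 huA) (Finset.mem_coe.2 hvA) hteq
      · exact absurd (hcross P P' hP hP' hPP _ ((htokf P hP).1 u huA).1
          _ ((htokf P' hP').1 v hvA).1 (by rw [← hu1, ← hv1, heq])) (fun h => h)
  -- the crucial slot analysis (left)
  have hLcore : ∀ j, j < n → Lnm j ∈ S₀.image vh → pj j ∈ S₀ ∧ Lnm j = vh (pj j) := by
    intro j hj hmem
    obtain ⟨v, hvS₀, hveq⟩ := Finset.mem_image.1 hmem
    by_cases hInfj : Inf (PL j)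
    · by_cases hpS : pj j ∈ S₀
      · obtain ⟨hfr, htokeq⟩ := hLfresh j hj hInfj hpS
        have hAm : pj j ∈ A (PL j) := Finset.mem_inter.2 ⟨hpS, hNPL j hj⟩
        rcases hvhcases v hvS₀ with ⟨_, hv1, hv2⟩ | ⟨P, hP, hvA, hv1, hv2⟩
        · omega
        · have hLt : Lnm j = nameOf (tokf (PL j) (pj j)) := by
            show nameOf (newL j) = _
            rw [htokeq]
          have hnmeq : nameOf (tokf P v) = nameOf (tokf (PL j) (pj j)) := by
            rw [← hv1, hveq, hLt]
          by_cases hPP : P = PL j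
          · subst hPP
            have hteq := hsamepair (PL j) hP _ ((htokf (PL j) hP).1 v hvA).1 _
              ((htokf (PL j) hP).1 _ hAm).1 hnmeq
            have hveqv : v = pj j :=
              (htokf (PL j) hP).2.1 (Finset.mem_coe.2 hvA) (Finset.mem_coe.2 hAm) hteq
            refine ⟨hpS, ?_⟩
            rw [← hveqv]
            exact hveq.symm
          · exact absurd (hcross P (PL j) hP hInfj hPP _ ((htokf P hP).1 v hvA).1 _
              ((htokf (PL j) hInfj).1 _ hAm).1 hnmeq) (fun h => h)
      · have hnewLeq : newL j = xtr (PL j) := by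
          rw [hnewL]; simp only [if_pos hInfj, if_neg hpS]
        have hLx : Lnm j = nameOf (xtr (PL j)) := by
          show nameOf (newL j) = _
          rw [hnewLeq]
        have hxmem := (htokf (PL j) hInfj).2.2.1
        rcases hvhcases v hvS₀ with ⟨hnoInf, hv1, hv2⟩ | ⟨P, hP, hvA, hv1, hv2⟩
        · have hvt : xtr (PL j) ∈ VertTokens := (hpsVM _ hInfj _ hxmem).2
          have hlen0 := vertTok_length hvt
          have hlen : (xtr (PL j)).length < cQ + 2 := by omega
          have hAbig := (htokf (PL j) hInfj).2.2.2.2 hlen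
          have hAeq : A (PL j) = S₀ := Finset.eq_of_subset_of_card_le (hAS₀ _) (by omega)
          have hvA' : v ∈ A (PL j) := by rw [hAeq]; exact hvS₀
          have hvN : v ∈ NP (PL j) := (Finset.mem_inter.1 hvA').2
          exact absurd (hNPInf _ _ hInfj hvN) hnoInf
        · have hnm : nameOf (tokf P v) = nameOf (xtr (PL j)) := by
            rw [← hv1, hveq, hLx]
          by_cases hPP : P = PL j
          · subst hPP
            have hteq := hsamepair (PL j) hP _ ((htokf (PL j) hP).1 v hvA).1 _ hxmem hnm
            exact absurd hteq ((htokf (PL j) hP).2.2.2.1 v hvA)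
          · exact absurd (hcross P (PL j) hP hInfj hPP _ ((htokf P hP).1 v hvA).1 _
              hxmem hnm) (fun h => h)
    · obtain ⟨hLn, hbound⟩ := hLkept j hj hInfj
      rcases hvhcases v hvS₀ with ⟨hnoInf, hv1, hv2⟩ | ⟨P, hP, hvA, hv1, hv2⟩
      · have hpv : pj j = v := by omega
        refine ⟨by rw [hpv]; exact hvS₀, ?_⟩
        rw [hpv, hv1, ← hveq, hv1]
      · omega
  -- the crucial slot analysis (right)
  have hRcore : ∀ j, j < n → Rnm j ∈ S₀.image vh → qj j ∈ S₀ ∧ Rnm j = vh (qj j) := by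
    intro j hj hmem
    obtain ⟨v, hvS₀, hveq⟩ := Finset.mem_image.1 hmem
    by_cases hInfj : Inf (PR j)
    · by_cases hqS : qj j ∈ S₀
      · obtain ⟨hfr, htokeq⟩ := hRfresh j hj hInfj hqS
        have hAm : qj j ∈ A (PR j) := Finset.mem_inter.2 ⟨hqS, hNPR j hj⟩
        rcases hvhcases v hvS₀ with ⟨_, hv1, hv2⟩ | ⟨P, hP, hvA, hv1, hv2⟩
        · omega
        · have hLt : Rnm j = nameOf (tokf (PR j) (qj j)) := by
            show nameOf (newR j) = _
            rw [htokeq]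
          have hnmeq : nameOf (tokf P v) = nameOf (tokf (PR j) (qj j)) := by
            rw [← hv1, hveq, hLt]
          by_cases hPP : P = PR j
          · subst hPP
            have hteq := hsamepair (PR j) hP _ ((htokf (PR j) hP).1 v hvA).1 _
              ((htokf (PR j) hP).1 _ hAm).1 hnmeq
            have hveqv : v = qj j :=
              (htokf (PR j) hP).2.1 (Finset.mem_coe.2 hvA) (Finset.mem_coe.2 hAm) hteq
            refine ⟨hqS, ?_⟩
            rw [← hveqv]
            exact hveq.symm
          · exact absurd (hcross P (PR j) hP hInfj hPP _ ((htokf P hP).1 v hvA).1 _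
              ((htokf (PR j) hInfj).1 _ hAm).1 hnmeq) (fun h => h)
      · have hnewReq : newR j = xtr (PR j) := by
          rw [hnewR]; simp only [if_pos hInfj, if_neg hqS]
        have hLx : Rnm j = nameOf (xtr (PR j)) := by
          show nameOf (newR j) = _
          rw [hnewReq]
        have hxmem := (htokf (PR j) hInfj).2.2.1
        rcases hvhcases v hvS₀ with ⟨hnoInf, hv1, hv2⟩ | ⟨P, hP, hvA, hv1, hv2⟩
        · have hvt : xtr (PR j) ∈ VertTokens := (hpsVM _ hInfj _ hxmem).2
          have hlen0 := vertTok_length hvt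
          have hlen : (xtr (PR j)).length < cQ + 2 := by omega
          have hAbig := (htokf (PR j) hInfj).2.2.2.2 hlen
          have hAeq : A (PR j) = S₀ := Finset.eq_of_subset_of_card_le (hAS₀ _) (by omega)
          have hvA' : v ∈ A (PR j) := by rw [hAeq]; exact hvS₀
          have hvN : v ∈ NP (PR j) := (Finset.mem_inter.1 hvA').2
          exact absurd (hNPInf _ _ hInfj hvN) hnoInf
        · have hnm : nameOf (tokf P v) = nameOf (xtr (PR j)) := by
            rw [← hv1, hveq, hLx]
          by_cases hPP : P = PR j
          · subst hPP
            have hteq := hsamepair (PR j) hP _ ((htokf (PR j) hP).1 v hvA).1 _ hxmem hnm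
            exact absurd hteq ((htokf (PR j) hP).2.2.2.1 v hvA)
          · exact absurd (hcross P (PR j) hP hInfj hPP _ ((htokf P hP).1 v hvA).1 _
              hxmem hnm) (fun h => h)
    · obtain ⟨hLn, hbound⟩ := hRkept j hj hInfj
      rcases hvhcases v hvS₀ with ⟨hnoInf, hv1, hv2⟩ | ⟨P, hP, hvA, hv1, hv2⟩
      · have hqv : qj j = v := by omega
        refine ⟨by rw [hqv]; exact hvS₀, ?_⟩
        rw [hqv, hv1, ← hveq, hv1]
      · omega
  -- the image of S₀ is contained in the new vertex set
  have hsubV : ∀ v ∈ S₀, vh v ∈ (graphOf es').V := by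
    intro v hv
    rcases hvhcases v hv with ⟨hno, hv1, _⟩ | ⟨P, hP, hvA, hv1, _⟩
    · obtain ⟨x, hx, hside⟩ := graphOf_vert_elim (hSsub (hS₀S hv))
      obtain ⟨j, hj, hgd⟩ := exists_getD_of_mem hx (0, 0)
      rcases hside with h1 | h1
      · have hpv : pj j = v := by show (es.getD j (0, 0)).1 = v; rw [hgd]; exact h1
        have hnotInf : ¬ Inf (PL j) := fun hI => hno ⟨j, hj, Or.inl ⟨hI, hpv⟩⟩
        have hLn := (hLkept j hj hnotInf).1
        have : vh v = (es'.getD j (0, 0)).1 := by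
          rw [hes'getD j hj, hv1, ← hpv, hLn]
        rw [this]
        exact (graphOf_vert_intro (mem_getD_of_lt es' j (by omega) (0, 0))).1
      · have hqv : qj j = v := by show (es.getD j (0, 0)).2 = v; rw [hgd]; exact h1
        have hnotInf : ¬ Inf (PR j) := fun hI => hno ⟨j, hj, Or.inr ⟨hI, hqv⟩⟩
        have hRn := (hRkept j hj hnotInf).1
        have : vh v = (es'.getD j (0, 0)).2 := by
          rw [hes'getD j hj, hv1, ← hqv, hRn]
        rw [this]
        exact (graphOf_vert_intro (mem_getD_of_lt es' j (by omega) (0, 0))).2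
    · have hvN : v ∈ NP P := (Finset.mem_inter.1 hvA).2
      rcases Finset.mem_union.1 hvN with h | h
      · obtain ⟨j, hjf, hpv⟩ := Finset.mem_image.1 h
        obtain ⟨hjr, hPLj⟩ := Finset.mem_filter.1 hjf
        have hj : j < n := Finset.mem_range.1 hjr
        have hInfj : Inf (PL j) := by rw [hPLj]; exact hP
        have hpS : pj j ∈ S₀ := by rw [hpv]; exact hv
        obtain ⟨_, htokeq⟩ := hLfresh j hj hInfj hpS
        have : vh v = (es'.getD j (0, 0)).1 := by
          rw [hes'getD j hj, hv1]
          show nameOf (tokf P v) = nameOf (newL j)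
          rw [htokeq, hPLj, hpv]
        rw [this]
        exact (graphOf_vert_intro (mem_getD_of_lt es' j (by omega) (0, 0))).1
      · obtain ⟨j, hjf, hqv⟩ := Finset.mem_image.1 h
        obtain ⟨hjr, hPRj⟩ := Finset.mem_filter.1 hjf
        have hj : j < n := Finset.mem_range.1 hjr
        have hInfj : Inf (PR j) := by rw [hPRj]; exact hP
        have hqS : qj j ∈ S₀ := by rw [hqv]; exact hv
        obtain ⟨_, htokeq⟩ := hRfresh j hj hInfj hqS
        have : vh v = (es'.getD j (0, 0)).2 := by
          rw [hes'getD j hj, hv1]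
          show nameOf (tokf P v) = nameOf (newR j)
          rw [htokeq, hPRj, hqv]
        rw [this]
        exact (graphOf_vert_intro (mem_getD_of_lt es' j (by omega) (0, 0))).2
  -- assembly
  refine ⟨encode k₀ es', hhat, graphOf es', k₀, ⟨es', rfl, rfl⟩, S₀.image vh, ?_, ?_, ?_⟩
  · intro x hx
    obtain ⟨v, hv, rfl⟩ := Finset.mem_image.1 hx
    exact hsubV v hv
  · rw [Finset.card_image_of_injOn hvhinj, hS₀card]
  · have hLcore' : ∀ j, j < es.length → (es'.getD j (0, 0)).1 ∈ S₀.image vh →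
        (es.getD j (0, 0)).1 ∈ S₀ ∧ (es'.getD j (0, 0)).1 = vh (es.getD j (0, 0)).1 := by
      intro j hj h1
      rw [hes'getD j hj] at h1 ⊢
      exact hLcore j hj h1
    have hRcore' : ∀ j, j < es.length → (es'.getD j (0, 0)).2 ∈ S₀.image vh →
        (es.getD j (0, 0)).2 ∈ S₀ ∧ (es'.getD j (0, 0)).2 = vh (es.getD j (0, 0)).2 := by
      intro j hj h1
      rw [hes'getD j hj] at h1 ⊢
      exact hRcore j hj h1
    exact core_indep (by rw [hes'len]) hS₀S hSind vh hvhinj hLcore' hRcore'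

end Forward

/-- For `rep(p,q) = pick_threshold_K(0, p, q) ∪ pick_separate_V(|Q|+1, |Q|, p, q)`
(with the threshold-token sets `K_M` and the vertex-token sets `V_M`), `L(M)` contains an
encoded positive Independent Set instance iff the finite core `decode(L(M̂_rep))` contains a
positive Independent Set instance. -/
theorem stmt12 {Q : Type} [Fintype Q] (M : NFA' Q)
    (hEnc : M.lang ⊆ Enc) (hre : M.Reachable) (hco : M.CoReachable)
    (ps : Q → Q → Set Word)
    (hps : IsPickSeparate (VM M) (Fintype.card Q + 1) (Fintype.card Q) ps)
    (rep : Q → Q → Set Word)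
    (hrepdef : ∀ p q : Q, rep p q = pickThreshold (KM M) 0 p q ∪ ps p q) :
    (∃ w ∈ M.lang, ∃ (G : FinGraph) (k : ℕ), decodesTo w G k ∧ HasIS G k) ↔
      (∃ w ∈ hatLang M rep, ∃ (G : FinGraph) (k : ℕ), decodesTo w G k ∧ HasIS G k) := by
  constructor
  · rintro ⟨w, hw, G, k, ⟨es, rfl, rfl⟩, hIS⟩
    exact forward M hEnc hre hco ps hps rep hrepdef hw hIS
  · rintro ⟨w, hw, G, k, hdec, hIS⟩
    have hrepsub : ∀ p q : Q, rep p q ⊆ (M.between p q).lang := by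
      intro p q u hu
      rw [hrepdef] at hu
      obtain ⟨ord, hordinj, hpscl⟩ := hps
      rcases hu with hu | hu
      · rcases hu with ⟨_, hu⟩ | ⟨_, hu⟩
        · exact hu.1
        · exact hu.1.1.1
      · by_cases hf : (VM M p q).Finite
        · rw [(hpscl p q).1 hf] at hu
          exact hu.1
        · exact (((hpscl p q).2 hf).1 u hu).1.1
    exact ⟨w, hatLang_subset_lang hrepsub hw, G, k, hdec, hIS⟩
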